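/- arXiv:1903.02836 — 5 statements merged into one kernel-verified Lean document; each statement's English description precedes it below -/
import Mathlib

section
/- Let n be even, let a = (a_1,...,a_n), r = (r_1,...,r_n) ∈ ℝ^n, and set k = P^{-1} r (P being invertible for even n). Then for every x in the positive orthant (0,∞)^n and every i = 1,...,n, the right-hand side of the Lotka–Volterra system satisfies x_i (Σ_{j>i} a_j x_j − Σ_{j<i} a_j x_j + r_i) = {x_i, H}(x), where H(x) = Σ_{i=1}^n (a_i x_i + k_i log x_i); that is, the Lotka–Volterra system is Hamiltonian with respect to the log-canonical Poisson bracket with Hamiltonian H. -/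
/-- Partial derivative `∂f/∂x_i` of a function on `ℝⁿ`. -/
noncomputable def pd {n : ℕ} (f : (Fin n → ℝ) → ℝ) (x : Fin n → ℝ) (i : Fin n) : ℝ :=
  fderiv ℝ f x (Pi.single i 1)

/-- The log-canonical Poisson bracket
`{f,g}(x) = Σ_{i<j} x_i x_j (∂f/∂x_i ∂g/∂x_j − ∂f/∂x_j ∂g/∂x_i)`. -/
noncomputable def pb {n : ℕ} (f g : (Fin n → ℝ) → ℝ) (x : Fin n → ℝ) : ℝ :=
  ∑ i : Fin n, ∑ j : Fin n,
    if i < j then x i * x j * (pd f x i * pd g x j - pd f x j * pd g x i) else 0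

/-- The antisymmetric matrix with `P i j = 1` for `i < j`, `-1` for `i > j`, `0` on the diagonal. -/
def Pmat (n : ℕ) : Matrix (Fin n) (Fin n) ℝ :=
  fun i j => if i < j then 1 else if j < i then -1 else 0

/-- `J_m(x) = (x_1 x_3 ⋯ x_{2m−1})/(x_2 x_4 ⋯ x_{2m})` (1-based; here indices are 0-based,
so the numerator ranges over even indices `< 2m` and the denominator over odd indices `< 2m`). -/
noncomputable def Jfun {n : ℕ} (m : ℕ) (x : Fin n → ℝ) : ℝ :=
  (∏ i ∈ Finset.univ.filter (fun i : Fin n => i.val < 2*m ∧ Even i.val), x i) /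
  (∏ i ∈ Finset.univ.filter (fun i : Fin n => i.val < 2*m ∧ Odd i.val), x i)

/-- `I_m(x) = (x_{2m+2} x_{2m+4} ⋯ x_n)/(x_{2m+1} x_{2m+3} ⋯ x_{n−1})` (1-based; here 0-based:
numerator over odd indices `≥ 2m`, denominator over even indices `≥ 2m`). -/
noncomputable def Ifun {n : ℕ} (m : ℕ) (x : Fin n → ℝ) : ℝ :=
  (∏ i ∈ Finset.univ.filter (fun i : Fin n => 2*m ≤ i.val ∧ Odd i.val), x i) /
  (∏ i ∈ Finset.univ.filter (fun i : Fin n => 2*m ≤ i.val ∧ Even i.val), x i)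

/-- `v_m(x) = a_1 x_1 + ⋯ + a_m x_m` (sum of the first `m` coordinates, 0-based indices `< m`). -/
def vfun {n : ℕ} (a : Fin n → ℝ) (m : ℕ) (x : Fin n → ℝ) : ℝ :=
  ∑ j ∈ Finset.univ.filter (fun j : Fin n => j.val < m), a j * x j

/-- `F_m = v_{2m} I_m`. -/
noncomputable def Ffun {n : ℕ} (a : Fin n → ℝ) (m : ℕ) (x : Fin n → ℝ) : ℝ :=
  vfun a (2*m) x * Ifun m x

/-- The Hamiltonian `H(x) = Σ_i (a_i x_i + k_i log x_i)`. -/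
noncomputable def Hfun {n : ℕ} (a k : Fin n → ℝ) (x : Fin n → ℝ) : ℝ :=
  ∑ i, (a i * x i + k i * Real.log (x i))

section LVAux

private lemma lv_sum_alt (a b : ℕ) (h : a ≤ b) :
    ∑ l ∈ Finset.Ico a b, ((-1:ℝ))^l = ((-1)^a - (-1)^b)/2 := by
  induction b, h using Nat.le_induction with
  | base => simp
  | succ b hb ih =>
      rw [Finset.sum_Ico_succ_top hb, ih, pow_succ]
      ring

private lemma lv_sum_alt_mul (a b : ℕ) (h : a ≤ b) (c : ℝ) :
    ∑ l ∈ Finset.Ico a b, c * ((-1:ℝ))^l = c * (((-1)^a - (-1)^b)/2) := by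
  rw [← Finset.mul_sum, lv_sum_alt a b h]

private lemma lv_split2 (n u : ℕ) (hu : u < n) (f : ℕ → ℝ) :
    ∑ l ∈ Finset.range n, f l =
      (∑ l ∈ Finset.Ico 0 u, f l) + f u + (∑ l ∈ Finset.Ico (u+1) n, f l) := by
  rw [Finset.range_eq_Ico,
    ← Finset.sum_Ico_consecutive f (Nat.zero_le u) hu.le,
    Finset.sum_eq_sum_Ico_succ_bot hu f]
  ring

private lemma lv_split3 (n u v : ℕ) (huv : u < v) (hvn : v < n) (f : ℕ → ℝ) :
    ∑ l ∈ Finset.range n, f l =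
      (∑ l ∈ Finset.Ico 0 u, f l) + f u + (∑ l ∈ Finset.Ico (u+1) v, f l) + f v
        + (∑ l ∈ Finset.Ico (v+1) n, f l) := by
  rw [Finset.range_eq_Ico,
    ← Finset.sum_Ico_consecutive f (Nat.zero_le v) hvn.le,
    ← Finset.sum_Ico_consecutive f (Nat.zero_le u) huv.le,
    Finset.sum_eq_sum_Ico_succ_bot huv f,
    Finset.sum_eq_sum_Ico_succ_bot hvn f]
  ring

/-- the sign pattern of `Pmat` as a function on naturals -/
noncomputable def lv_pnat (a b : ℕ) : ℝ := if a < b then 1 else if b < a then -1 else 0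

private lemma lv_entry (n : ℕ) (hn : Even n) (i j : ℕ) (hi : i < n) (hj : j < n) :
    ∑ l ∈ Finset.range n, lv_pnat i l * (-1:ℝ)^(l+j) * lv_pnat l j
      = if i = j then 1 else 0 := by
  have hne : ((-1:ℝ))^n = 1 := hn.neg_one_pow
  rcases lt_trichotomy i j with hij | hij | hij
  · rw [if_neg (by omega)]
    rw [lv_split3 n i j hij hj _]
    have e1 : ∀ l ∈ Finset.Ico 0 i, lv_pnat i l * (-1:ℝ)^(l+j) * lv_pnat l j
        = (-(-1)^j) * (-1)^l := by
      intro l hl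
      simp only [Finset.mem_Ico] at hl
      simp only [lv_pnat, if_neg (by omega : ¬ i < l), if_pos (by omega : l < i),
        if_pos (by omega : l < j), pow_add]
      ring
    have e2 : ∀ l ∈ Finset.Ico (i+1) j, lv_pnat i l * (-1:ℝ)^(l+j) * lv_pnat l j
        = ((-1:ℝ)^j) * (-1)^l := by
      intro l hl
      simp only [Finset.mem_Ico] at hl
      simp only [lv_pnat, if_pos (by omega : i < l), if_pos (by omega : l < j), pow_add]
      ring
    have e3 : ∀ l ∈ Finset.Ico (j+1) n, lv_pnat i l * (-1:ℝ)^(l+j) * lv_pnat l j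
        = (-(-1:ℝ)^j) * (-1)^l := by
      intro l hl
      simp only [Finset.mem_Ico] at hl
      simp only [lv_pnat, if_pos (by omega : i < l), if_neg (by omega : ¬ l < j),
        if_pos (by omega : j < l), pow_add]
      ring
    rw [Finset.sum_congr rfl e1, Finset.sum_congr rfl e2, Finset.sum_congr rfl e3,
      lv_sum_alt_mul 0 i (Nat.zero_le i), lv_sum_alt_mul (i+1) j (by omega),
      lv_sum_alt_mul (j+1) n (by omega)]
    have z1 : lv_pnat i i = 0 := by simp [lv_pnat]
    have z2 : lv_pnat j j = 0 := by simp [lv_pnat]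
    rw [z1, z2, pow_succ, pow_succ, pow_zero, hne]
    ring
  · subst hij
    rw [if_pos rfl, lv_split2 n i hi _]
    have e1 : ∀ l ∈ Finset.Ico 0 i, lv_pnat i l * (-1:ℝ)^(l+i) * lv_pnat l i
        = (-(-1)^i) * (-1)^l := by
      intro l hl
      simp only [Finset.mem_Ico] at hl
      simp only [lv_pnat, if_neg (by omega : ¬ i < l), if_pos (by omega : l < i), pow_add]
      ring
    have e2 : ∀ l ∈ Finset.Ico (i+1) n, lv_pnat i l * (-1:ℝ)^(l+i) * lv_pnat l i
        = (-(-1:ℝ)^i) * (-1)^l := by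
      intro l hl
      simp only [Finset.mem_Ico] at hl
      simp only [lv_pnat, if_pos (by omega : i < l), if_neg (by omega : ¬ l < i), pow_add]
      ring
    rw [Finset.sum_congr rfl e1, Finset.sum_congr rfl e2,
      lv_sum_alt_mul 0 i (Nat.zero_le i), lv_sum_alt_mul (i+1) n (by omega)]
    have z1 : lv_pnat i i = 0 := by simp [lv_pnat]
    have hX : ((-1:ℝ))^i * (-1)^i = 1 := by
      rw [← pow_add]; exact Even.neg_one_pow ⟨i, rfl⟩
    rw [z1, pow_succ, pow_zero, hne]
    linear_combination hX
  · rw [if_neg (by omega)]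
    rw [lv_split3 n j i hij hi _]
    have e1 : ∀ l ∈ Finset.Ico 0 j, lv_pnat i l * (-1:ℝ)^(l+j) * lv_pnat l j
        = (-(-1)^j) * (-1)^l := by
      intro l hl
      simp only [Finset.mem_Ico] at hl
      simp only [lv_pnat, if_neg (by omega : ¬ i < l), if_pos (by omega : l < i),
        if_pos (by omega : l < j), pow_add]
      ring
    have e2 : ∀ l ∈ Finset.Ico (j+1) i, lv_pnat i l * (-1:ℝ)^(l+j) * lv_pnat l j
        = ((-1:ℝ)^j) * (-1)^l := by
      intro l hl
      simp only [Finset.mem_Ico] at hl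
      simp only [lv_pnat, if_neg (by omega : ¬ i < l), if_pos (by omega : l < i),
        if_neg (by omega : ¬ l < j), if_pos (by omega : j < l), pow_add]
      ring
    have e3 : ∀ l ∈ Finset.Ico (i+1) n, lv_pnat i l * (-1:ℝ)^(l+j) * lv_pnat l j
        = (-(-1:ℝ)^j) * (-1)^l := by
      intro l hl
      simp only [Finset.mem_Ico] at hl
      simp only [lv_pnat, if_pos (by omega : i < l), if_neg (by omega : ¬ l < j),
        if_pos (by omega : j < l), pow_add]
      ring
    rw [Finset.sum_congr rfl e1, Finset.sum_congr rfl e2, Finset.sum_congr rfl e3,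
      lv_sum_alt_mul 0 j (Nat.zero_le j), lv_sum_alt_mul (j+1) i (by omega),
      lv_sum_alt_mul (i+1) n (by omega)]
    have z1 : lv_pnat i i = 0 := by simp [lv_pnat]
    have z2 : lv_pnat j j = 0 := by simp [lv_pnat]
    rw [pow_succ, pow_succ, pow_zero, hne, z1, z2]
    ring

/-- the explicit inverse of `Pmat n` for even `n` -/
noncomputable def lv_Qmat (n : ℕ) : Matrix (Fin n) (Fin n) ℝ :=
  fun i j => (-1:ℝ)^(i.val + j.val) * Pmat n i j

private lemma lv_Pmat_eq_pnat {n : ℕ} (i j : Fin n) : Pmat n i j = lv_pnat i.val j.val := by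
  simp only [Pmat, lv_pnat, Fin.lt_def]

private lemma lv_PQ_one (n : ℕ) (hn : Even n) : Pmat n * lv_Qmat n = 1 := by
  ext i j
  rw [Matrix.mul_apply]
  have h : ∀ l : Fin n, Pmat n i l * lv_Qmat n l j
      = lv_pnat i.val l.val * (-1:ℝ)^(l.val + j.val) * lv_pnat l.val j.val := by
    intro l
    rw [lv_Qmat, lv_Pmat_eq_pnat, lv_Pmat_eq_pnat]
    ring
  rw [Finset.sum_congr rfl (fun l _ => h l)]
  rw [Fin.sum_univ_eq_sum_range
    (fun l => lv_pnat i.val l * (-1:ℝ)^(l + j.val) * lv_pnat l j.val)]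
  rw [lv_entry n hn i.val j.val i.isLt j.isLt]
  simp [Matrix.one_apply, Fin.ext_iff]

private lemma lv_P_mulVec_k (n : ℕ) (hn : Even n) (r : Fin n → ℝ) :
    (Pmat n).mulVec ((Pmat n)⁻¹.mulVec r) = r := by
  have hinv : (Pmat n)⁻¹ = lv_Qmat n := Matrix.inv_eq_right_inv (lv_PQ_one n hn)
  rw [hinv, Matrix.mulVec_mulVec, lv_PQ_one n hn, Matrix.one_mulVec]

private lemma lv_row_expand (n : ℕ) (k : Fin n → ℝ) (i : Fin n) :
    (Pmat n).mulVec k i =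
      (∑ j ∈ Finset.univ.filter (fun j : Fin n => i < j), k j)
        - (∑ j ∈ Finset.univ.filter (fun j : Fin n => j < i), k j) := by
  rw [Matrix.mulVec, dotProduct]
  have h : ∀ j : Fin n, Pmat n i j * k j
      = (if i < j then k j else 0) - (if j < i then k j else 0) := by
    intro j
    rcases lt_trichotomy i j with h | h | h
    · simp [Pmat, h, not_lt_of_gt h]
    · simp [Pmat, h.le, lt_irrefl, h]
    · simp [Pmat, h, not_lt_of_gt h]
  rw [Finset.sum_congr rfl (fun j _ => h j), Finset.sum_sub_distrib,
    Finset.sum_filter, Finset.sum_filter]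

private lemma lv_pd_proj {n : ℕ} (i l : Fin n) (x : Fin n → ℝ) :
    pd (fun y => y i) x l = if i = l then 1 else 0 := by
  have h : fderiv ℝ (fun y : Fin n → ℝ => y i) x
      = (ContinuousLinearMap.proj i : (Fin n → ℝ) →L[ℝ] ℝ) :=
    (ContinuousLinearMap.proj i : (Fin n → ℝ) →L[ℝ] ℝ).fderiv
  rw [pd, h]
  simp [ContinuousLinearMap.proj_apply, Pi.single_apply]

private lemma lv_hasFDerivAt_H {n : ℕ} (a k : Fin n → ℝ) (x : Fin n → ℝ) (hx : ∀ i, 0 < x i) :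
    HasFDerivAt (Hfun a k)
      (∑ p : Fin n, (a p + k p / x p) •
        (ContinuousLinearMap.proj p : (Fin n → ℝ) →L[ℝ] ℝ)) x := by
  have hterm : ∀ p : Fin n, HasFDerivAt (fun y : Fin n → ℝ => a p * y p + k p * Real.log (y p))
      ((a p + k p / x p) • (ContinuousLinearMap.proj p : (Fin n → ℝ) →L[ℝ] ℝ)) x := by
    intro p
    have h1 : HasFDerivAt (fun y : Fin n → ℝ => y p)
        (ContinuousLinearMap.proj p : (Fin n → ℝ) →L[ℝ] ℝ) x :=
      (ContinuousLinearMap.proj p : (Fin n → ℝ) →L[ℝ] ℝ).hasFDerivAt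
    have hlog : HasDerivAt Real.log (x p)⁻¹ (x p) := Real.hasDerivAt_log (hx p).ne'
    have h2 : HasFDerivAt (fun y : Fin n → ℝ => Real.log (y p))
        ((x p)⁻¹ • (ContinuousLinearMap.proj p : (Fin n → ℝ) →L[ℝ] ℝ)) x :=
      by have := hlog.comp_hasFDerivAt x h1; exact this
    have h3 := (h1.const_mul (a p)).add (h2.const_mul (k p))
    have e : (a p + k p / x p) • (ContinuousLinearMap.proj p : (Fin n → ℝ) →L[ℝ] ℝ)
        = a p • (ContinuousLinearMap.proj p : (Fin n → ℝ) →L[ℝ] ℝ)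
          + k p • (x p)⁻¹ • (ContinuousLinearMap.proj p : (Fin n → ℝ) →L[ℝ] ℝ) :=
      ContinuousLinearMap.ext fun y => by
        simp only [ContinuousLinearMap.add_apply, ContinuousLinearMap.smul_apply,
          ContinuousLinearMap.proj_apply, smul_eq_mul, div_eq_mul_inv]
        ring
    rw [e]
    exact h3
  have h := HasFDerivAt.fun_sum (fun p (_ : p ∈ Finset.univ) => hterm p)
  exact h

private lemma lv_pd_H {n : ℕ} (a k : Fin n → ℝ) (x : Fin n → ℝ) (hx : ∀ i, 0 < x i) (l : Fin n) :
    pd (Hfun a k) x l = a l + k l / x l := by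
  rw [pd, (lv_hasFDerivAt_H a k x hx).fderiv]
  rw [ContinuousLinearMap.sum_apply]
  have h : ∀ p : Fin n, ((a p + k p / x p) •
      (ContinuousLinearMap.proj p : (Fin n → ℝ) →L[ℝ] ℝ)) (Pi.single l 1)
      = if p = l then a l + k l / x l else 0 := by
    intro p
    simp only [ContinuousLinearMap.smul_apply, ContinuousLinearMap.proj_apply,
      Pi.single_apply, smul_eq_mul]
    by_cases h : p = l <;> simp [h]
  rw [Finset.sum_congr rfl (fun p _ => h p), Finset.sum_ite_eq' Finset.univ l _]
  simp

end LVAux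

/-- For even `n`, with `k = P⁻¹ r`, the right-hand side of the Lotka–Volterra system equals
the log-canonical Poisson bracket `{x_i, H}` with `H(x) = Σ_i (a_i x_i + k_i log x_i)`:
the system is Hamiltonian. -/
theorem stmt_1 (n : ℕ) (hn : Even n) (a r k : Fin n → ℝ) (hk : k = (Pmat n)⁻¹.mulVec r)
    (x : Fin n → ℝ) (hx : ∀ i, 0 < x i) (i : Fin n) :
    x i * ((∑ j ∈ Finset.univ.filter (fun j : Fin n => i < j), a j * x j)
        - (∑ j ∈ Finset.univ.filter (fun j : Fin n => j < i), a j * x j) + r i)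
      = pb (fun y => y i) (Hfun a k) x := by
  have hr : r = (Pmat n).mulVec k := by rw [hk]; exact (lv_P_mulVec_k n hn r).symm
  have hri : r i = (∑ j ∈ Finset.univ.filter (fun j : Fin n => i < j), k j)
      - (∑ j ∈ Finset.univ.filter (fun j : Fin n => j < i), k j) := by
    rw [hr]; exact lv_row_expand n k i
  rw [pb]
  have hsum : ∀ p q : Fin n,
      (if p < q then x p * x q * (pd (fun y => y i) x p * pd (Hfun a k) x q
          - pd (fun y => y i) x q * pd (Hfun a k) x p) else 0)
      = (if p = i then (if i < q then x i * x q * (a q + k q / x q) else 0) else 0)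
        - (if q = i then (if p < i then x p * x i * (a p + k p / x p) else 0) else 0) := by
    intro p q
    rw [lv_pd_proj, lv_pd_proj, lv_pd_H a k x hx, lv_pd_H a k x hx]
    split_ifs <;>
      first
        | (subst_vars; ring1)
        | ring1
        | (exfalso; omega)
  rw [Finset.sum_congr rfl (fun p _ => Finset.sum_congr rfl (fun q _ => hsum p q))]
  rw [Finset.sum_congr rfl (fun p _ => Finset.sum_sub_distrib _ _)]
  rw [Finset.sum_sub_distrib]
  have h1 : ∀ p : Fin n,
      (∑ q : Fin n, (if p = i then (if i < q then x i * x q * (a q + k q / x q) else 0) else 0))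
      = if p = i then (∑ q : Fin n, (if i < q then x i * x q * (a q + k q / x q) else 0)) else 0 := by
    intro p
    by_cases h : p = i <;> simp [h]
  rw [Finset.sum_congr rfl (fun p _ => h1 p), Finset.sum_ite_eq' Finset.univ i]
  have h2 : ∀ p : Fin n,
      (∑ q : Fin n, (if q = i then (if p < i then x p * x i * (a p + k p / x p) else 0) else 0))
      = if p < i then x p * x i * (a p + k p / x p) else 0 := by
    intro p
    rw [Finset.sum_ite_eq' Finset.univ i]
    simp
  rw [Finset.sum_congr rfl (fun p _ => h2 p)]
  simp only [Finset.mem_univ, if_true]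
  have e1 : ∀ q : Fin n, (if i < q then x i * x q * (a q + k q / x q) else 0)
      = x i * ((if i < q then a q * x q else 0) + (if i < q then k q else 0)) := by
    intro q
    by_cases h : i < q
    · rw [if_pos h, if_pos h, if_pos h]
      have hq := (hx q).ne'
      field_simp
    · rw [if_neg h, if_neg h, if_neg h]
      ring
  have e2 : ∀ p : Fin n, (if p < i then x p * x i * (a p + k p / x p) else 0)
      = x i * ((if p < i then a p * x p else 0) + (if p < i then k p else 0)) := by
    intro p
    by_cases h : p < i
    · rw [if_pos h, if_pos h, if_pos h]
      have hp := (hx p).ne'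
      field_simp
    · rw [if_neg h, if_neg h, if_neg h]
      ring
  rw [Finset.sum_congr rfl (fun q _ => e1 q), Finset.sum_congr rfl (fun p _ => e2 p),
    ← Finset.mul_sum, ← Finset.mul_sum, Finset.sum_add_distrib, Finset.sum_add_distrib,
    ← Finset.sum_filter, ← Finset.sum_filter, ← Finset.sum_filter, ← Finset.sum_filter]
  rw [hri]
  ring
end

section
/- Let n be odd and define C(x) = (x_1 x_3 ⋯ x_n)/(x_2 x_4 ⋯ x_{n−1}) on the positive orthant (0,∞)^n. Then C is a Casimir of the log-canonical Poisson bracket: {C, x_j}(x) = 0 for every j = 1,...,n and every x ∈ (0,∞)^n. -/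
private lemma altsum (m : ℕ) :
    ∑ i ∈ Finset.range m, (-1 : ℝ) ^ i = if Even m then 0 else 1 := by
  induction m with
  | zero => simp
  | succ k ih =>
    rw [Finset.sum_range_succ, ih]
    rcases Nat.even_or_odd k with h | h
    · simp [h, Nat.even_add_one, h.neg_one_pow]
    · simp [Nat.even_add_one, Nat.not_even_iff_odd.2 h, h.neg_one_pow]

set_option maxHeartbeats 1000000 in
private lemma hasFDerivAt_prod {n : ℕ} (s : Finset (Fin n)) (x : Fin n → ℝ) :
    HasFDerivAt (fun y : Fin n → ℝ => ∏ i ∈ s, y i)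
      (∑ i ∈ s, (∏ l ∈ s.erase i, x l) •
        (ContinuousLinearMap.proj i : (Fin n → ℝ) →L[ℝ] ℝ)) x := by
  have h := HasFDerivAt.finset_prod (u := s) (𝕜 := ℝ) (x := x)
    (g := fun i (y : Fin n → ℝ) => y i)
    (g' := fun i => (ContinuousLinearMap.proj i : (Fin n → ℝ) →L[ℝ] ℝ))
    (fun i _ => (ContinuousLinearMap.proj i : (Fin n → ℝ) →L[ℝ] ℝ).hasFDerivAt)
  exact h

private lemma sum_apply_single {n : ℕ} (s : Finset (Fin n)) (x : Fin n → ℝ) (i : Fin n) :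
    (∑ k ∈ s, (∏ l ∈ s.erase k, x l) •
        (ContinuousLinearMap.proj k : (Fin n → ℝ) →L[ℝ] ℝ)) (Pi.single i 1)
      = if i ∈ s then ∏ l ∈ s.erase i, x l else 0 := by
  rw [ContinuousLinearMap.sum_apply]
  simp only [ContinuousLinearMap.smul_apply, ContinuousLinearMap.proj_apply,
    Pi.single_apply, smul_eq_mul, mul_ite, mul_one, mul_zero]
  exact Finset.sum_ite_eq' s i (fun k => ∏ l ∈ s.erase k, x l)

private lemma pd_coord {n : ℕ} (j k : Fin n) (x : Fin n → ℝ) :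
    pd (fun y => y j) x k = if k = j then 1 else 0 := by
  rw [pd, show (fun y : Fin n → ℝ => y j) =
    ⇑(ContinuousLinearMap.proj j : (Fin n → ℝ) →L[ℝ] ℝ) from rfl,
    (ContinuousLinearMap.proj j : (Fin n → ℝ) →L[ℝ] ℝ).fderiv]
  simp [Pi.single_apply, eq_comm]

private lemma parity_sum {n : ℕ} (hn : Odd n) (j : Fin n) :
    (∑ i : Fin n, if i < j then (-1:ℝ)^(i:ℕ) else 0)
      = ∑ k : Fin n, if j < k then (-1:ℝ)^(k:ℕ) else 0 := by
  have h1 : (∑ i : Fin n, if i < j then (-1:ℝ)^(i:ℕ) else 0)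
      = ∑ i ∈ Finset.range n, if i < (j:ℕ) then (-1:ℝ)^i else 0 := by
    rw [← Fin.sum_univ_eq_sum_range (fun i => if i < (j:ℕ) then (-1:ℝ)^i else 0)]
    exact Finset.sum_congr rfl fun i _ => by simp only [Fin.lt_def]
  have h2 : (∑ k : Fin n, if j < k then (-1:ℝ)^(k:ℕ) else 0)
      = ∑ k ∈ Finset.range n, if (j:ℕ) < k then (-1:ℝ)^k else 0 := by
    rw [← Fin.sum_univ_eq_sum_range (fun k => if (j:ℕ) < k then (-1:ℝ)^k else 0)]
    exact Finset.sum_congr rfl fun k _ => by simp only [Fin.lt_def]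
  have hjn : (j:ℕ) < n := j.isLt
  rw [h1, h2, ← Finset.sum_filter, ← Finset.sum_filter]
  have e1 : (Finset.range n).filter (fun i => i < (j:ℕ)) = Finset.range (j:ℕ) := by
    ext m; simp only [Finset.mem_filter, Finset.mem_range]; omega
  have e2 : (Finset.range n).filter (fun k => (j:ℕ) < k) = Finset.Ico ((j:ℕ)+1) n := by
    ext m; simp only [Finset.mem_filter, Finset.mem_range, Finset.mem_Ico]; omega
  rw [e1, e2, Finset.sum_Ico_eq_sub _ (by omega : (j:ℕ)+1 ≤ n), altsum, altsum, altsum]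
  have hne : ¬ Even n := Nat.not_even_iff_odd.2 hn
  rcases Nat.even_or_odd (j:ℕ) with h | h
  · simp [h, Nat.even_add_one, hne]
  · simp [Nat.not_even_iff_odd.2 h, Nat.even_add_one, hne]

/-- For odd `n`, `C(x) = (x_1 x_3 ⋯ x_n)/(x_2 x_4 ⋯ x_{n−1})` (0-based: even indices over odd
indices) is a Casimir of the log-canonical bracket: `{C, x_j} = 0` for all `j`. -/
theorem stmt_2 (n : ℕ) (hn : Odd n)
    (C : (Fin n → ℝ) → ℝ)
    (hC : C = fun y => (∏ i ∈ Finset.univ.filter (fun i : Fin n => Even i.val), y i) /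
                       (∏ i ∈ Finset.univ.filter (fun i : Fin n => Odd i.val), y i))
    (j : Fin n) (x : Fin n → ℝ) (hx : ∀ i, 0 < x i) :
    pb C (fun y => y j) x = 0 := by
  classical
  have hxne : ∀ i, x i ≠ 0 := fun i => (hx i).ne'
  set se := Finset.univ.filter (fun i : Fin n => Even i.val) with hse
  set so := Finset.univ.filter (fun i : Fin n => Odd i.val) with hso
  have hQx : (∏ l ∈ so, x l) ≠ 0 := Finset.prod_ne_zero_iff.2 fun l _ => hxne l
  -- partial derivatives of C
  have hd : ∀ i : Fin n, pd C x i = (-1:ℝ)^(i:ℕ) * C x / x i := by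
    intro i
    have hP := hasFDerivAt_prod se x
    have hQ := hasFDerivAt_prod so x
    have hinv : HasDerivAt (fun t : ℝ => t⁻¹) (-((∏ l ∈ so, x l) ^ 2)⁻¹)
        (∏ l ∈ so, x l) := hasDerivAt_inv hQx
    have hQinv : HasFDerivAt (fun y : Fin n → ℝ => (∏ l ∈ so, y l)⁻¹)
        ((-((∏ l ∈ so, x l) ^ 2)⁻¹) • (∑ k ∈ so, (∏ l ∈ so.erase k, x l) •
          (ContinuousLinearMap.proj k : (Fin n → ℝ) →L[ℝ] ℝ))) x :=
      hinv.comp_hasFDerivAt x hQ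
    have hCd : HasFDerivAt C
        ((∏ l ∈ se, x l) • ((-((∏ l ∈ so, x l) ^ 2)⁻¹) •
            (∑ k ∈ so, (∏ l ∈ so.erase k, x l) •
              (ContinuousLinearMap.proj k : (Fin n → ℝ) →L[ℝ] ℝ)))
          + (∏ l ∈ so, x l)⁻¹ • (∑ k ∈ se, (∏ l ∈ se.erase k, x l) •
              (ContinuousLinearMap.proj k : (Fin n → ℝ) →L[ℝ] ℝ))) x := by
      rw [hC]
      simpa only [div_eq_mul_inv, Pi.mul_def] using hP.mul hQinv
    rw [pd, hCd.fderiv]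
    simp only [ContinuousLinearMap.add_apply, ContinuousLinearMap.smul_apply,
      smul_eq_mul, sum_apply_single]
    rcases Nat.even_or_odd (i:ℕ) with h | h
    · have hmem : i ∈ se := by
        simp only [hse, Finset.mem_filter, Finset.mem_univ, true_and]
        exact h
      have hnmem : i ∉ so := by
        simp only [hso, Finset.mem_filter, Finset.mem_univ, true_and]
        exact Nat.not_odd_iff_even.2 h
      rw [if_neg hnmem, if_pos hmem]
      have herase : (∏ l ∈ se.erase i, x l) = (∏ l ∈ se, x l) / x i := by
        rw [eq_div_iff (hxne i)]
        exact Finset.prod_erase_mul _ _ hmem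
      rw [herase, Even.neg_one_pow h, hC]
      field_simp [hQx, hxne i]
      try ring
    · have hmem : i ∈ so := by
        simp only [hso, Finset.mem_filter, Finset.mem_univ, true_and]
        exact h
      have hnmem : i ∉ se := by
        simp only [hse, Finset.mem_filter, Finset.mem_univ, true_and]
        exact Nat.not_even_iff_odd.2 h
      rw [if_pos hmem, if_neg hnmem]
      have herase : (∏ l ∈ so.erase i, x l) = (∏ l ∈ so, x l) / x i := by
        rw [eq_div_iff (hxne i)]
        exact Finset.prod_erase_mul _ _ hmem
      rw [herase, Odd.neg_one_pow h, hC]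
      field_simp [hQx, hxne i]
      try ring
  -- expand the bracket
  have key : ∀ i k : Fin n,
      (if i < k then x i * x k * (pd C x i * pd (fun y => y j) x k
          - pd C x k * pd (fun y => y j) x i) else 0)
        = (if k = j ∧ i < k then (-1:ℝ)^(i:ℕ) else 0) * (x j * C x)
          - (if i = j ∧ i < k then (-1:ℝ)^(k:ℕ) else 0) * (x j * C x) := by
    intro i k
    rw [pd_coord, pd_coord, hd i, hd k]
    by_cases hik : i < k
    · by_cases hkj : k = j
      · subst hkj
        have hij : i ≠ k := ne_of_lt hik
        simp only [hik, hij, if_true, if_false, and_true, true_and, ite_true, ite_false,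
          if_pos rfl, if_neg hij, and_self, false_and, and_false]
        field_simp [hxne i, hxne k]
        try ring
      · by_cases hij : i = j
        · subst hij
          simp only [hik, hkj, if_true, if_false, and_true, true_and, ite_true, ite_false,
            if_pos rfl, if_neg hkj, and_self, false_and, and_false]
          field_simp [hxne i, hxne k]
          try ring
        · simp [hik, hkj, hij]
    · simp [hik]
  rw [pb]
  simp only [key, Finset.sum_sub_distrib, ← Finset.sum_mul]
  have hA : ∀ i : Fin n,
      (∑ k : Fin n, if k = j ∧ i < k then (-1:ℝ)^(i:ℕ) else 0)
        = (if i < j then (-1:ℝ)^(i:ℕ) else 0) := by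
    intro i
    simp only [ite_and]
    rw [Finset.sum_ite_eq' Finset.univ j (fun k => if i < k then (-1:ℝ)^(i:ℕ) else 0)]
    simp
  have hB : (∑ i : Fin n, ∑ k : Fin n, if i = j ∧ i < k then (-1:ℝ)^(k:ℕ) else 0)
      = ∑ k : Fin n, if j < k then (-1:ℝ)^(k:ℕ) else 0 := by
    rw [Finset.sum_comm]
    refine Finset.sum_congr rfl fun k _ => ?_
    simp only [ite_and]
    rw [Finset.sum_ite_eq' Finset.univ j (fun i => if i < k then (-1:ℝ)^(k:ℕ) else 0)]
    simp
  rw [Finset.sum_congr rfl (fun i _ => hA i), hB, ← sub_mul, parity_sum hn j, sub_self, zero_mul]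
end

section
/- Let n be even, let a = (a_1,...,a_n) ∈ ℝ^n with a ≠ 0, let ℓ denote the smallest integer such that a_{ℓ+1} ≠ 0 (so a_1 = ⋯ = a_ℓ = 0), and let λ = ⌊ℓ/2⌋. Then the n/2 functions J_1, J_2, ..., J_λ, F_{λ+1}, F_{λ+2}, ..., F_{n/2−1}, H_0 are pairwise in involution with respect to the log-canonical Poisson bracket on (0,∞)^n, and they are functionally independent. -/
open Finset

/-! ### Auxiliary combinatorial machinery -/

noncomputable def Om {n : ℕ} (u v : Fin n → ℝ) : ℝ :=
  ∑ i : Fin n, ∑ j : Fin n, if i < j then u i * v j - u j * v i else 0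

def altP : ℕ → ℝ := fun i => if i % 2 = 0 then 1 else -1
def epsV (n m : ℕ) : Fin n → ℝ := fun i => if i.val < 2*m then altP i.val else 0
def etaV (n m : ℕ) : Fin n → ℝ := fun i => if 2*m ≤ i.val then -altP i.val else 0
def chiV {n : ℕ} (b : Fin n → ℝ) (m : ℕ) : Fin n → ℝ :=
  fun i => if i.val < 2*m then b i else 0

lemma altP_sum_eps (m t : ℕ) :
    ∑ i ∈ Finset.range t, (if i < 2*m then altP i else 0)
      = if t % 2 = 1 ∧ t ≤ 2*m then 1 else 0 := by
  induction t with
  | zero => simp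
  | succ t ih =>
    rw [Finset.sum_range_succ, ih]
    unfold altP
    split_ifs <;> first | omega | norm_num

lemma altP_sum_eta (m t : ℕ) :
    ∑ i ∈ Finset.range t, (if 2*m ≤ i then -altP i else 0)
      = if t % 2 = 1 ∧ 2*m+1 ≤ t then -1 else 0 := by
  induction t with
  | zero => simp
  | succ t ih =>
    rw [Finset.sum_range_succ, ih]
    unfold altP
    split_ifs <;> first | omega | norm_num

lemma finsum_lt {n t : ℕ} (ht : t ≤ n) (p : ℕ → ℝ) :
    (∑ j : Fin n, if j.val < t then p j.val else 0) = ∑ i ∈ Finset.range t, p i := by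
  rw [Fin.sum_univ_eq_sum_range (fun i => if i < t then p i else 0) n]
  rw [← Finset.sum_filter]
  congr 1
  ext k
  simp only [Finset.mem_filter, Finset.mem_range]
  omega

lemma finsum_gt {n t : ℕ} (ht : t < n) (p : ℕ → ℝ) :
    (∑ j : Fin n, if t < j.val then p j.val else 0)
      = (∑ i ∈ Finset.range n, p i) - ∑ i ∈ Finset.range (t+1), p i := by
  rw [Fin.sum_univ_eq_sum_range (fun i => if t < i then p i else 0) n]
  rw [← Finset.sum_filter, ← Finset.sum_Ico_eq_sub p (by omega : t+1 ≤ n)]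
  congr 1
  ext k
  simp only [Finset.mem_filter, Finset.mem_range, Finset.mem_Ico]
  omega

lemma finsum_ge {n t : ℕ} (ht : t ≤ n) (p : ℕ → ℝ) :
    (∑ j : Fin n, if t ≤ j.val then p j.val else 0)
      = (∑ i ∈ Finset.range n, p i) - ∑ i ∈ Finset.range t, p i := by
  rw [Fin.sum_univ_eq_sum_range (fun i => if t ≤ i then p i else 0) n]
  rw [← Finset.sum_filter, ← Finset.sum_Ico_eq_sub p ht]
  congr 1
  ext k
  simp only [Finset.mem_filter, Finset.mem_range, Finset.mem_Ico]
  omega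

lemma Om_repr {n : ℕ} (u v : Fin n → ℝ) :
    Om u v = ∑ j : Fin n,
      ((∑ i : Fin n, if i < j then u i else 0) - (∑ i : Fin n, if j < i then u i else 0)) * v j := by
  have h1 : ∀ i j : Fin n, (if i < j then u i * v j - u j * v i else 0)
      = (if i < j then u i else 0) * v j - (if i < j then u j else 0) * v i := by
    intro i j; split_ifs <;> ring
  simp only [Om, h1, Finset.sum_sub_distrib]
  rw [Finset.sum_comm]
  simp only [← Finset.sum_mul]
  rw [← Finset.sum_sub_distrib]
  apply Finset.sum_congr rfl
  intro j _
  ring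

lemma Om_eps {N m : ℕ} (hm : m ≤ N) (v : Fin (2*N) → ℝ) :
    Om (epsV (2*N) m) v = ∑ j : Fin (2*N), (if j.val < 2*m then v j else 0) := by
  rw [Om_repr]
  apply Finset.sum_congr rfl
  intro j _
  have hj := j.isLt
  have h1 : (∑ i : Fin (2*N), if i < j then epsV (2*N) m i else 0)
      = if j.val % 2 = 1 ∧ j.val ≤ 2*m then 1 else 0 := by
    simp only [epsV, Fin.lt_def]
    rw [finsum_lt (le_of_lt hj) (fun k => if k < 2*m then altP k else 0), altP_sum_eps]
  have h2 : (∑ i : Fin (2*N), if j < i then epsV (2*N) m i else 0)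
      = (if (2*N) % 2 = 1 ∧ 2*N ≤ 2*m then 1 else 0)
        - (if (j.val+1) % 2 = 1 ∧ j.val+1 ≤ 2*m then 1 else 0) := by
    simp only [epsV, Fin.lt_def]
    rw [finsum_gt hj (fun k => if k < 2*m then altP k else 0), altP_sum_eps, altP_sum_eps]
  rw [h1, h2]
  split_ifs <;> first | omega | ring

lemma Om_eta {N m : ℕ} (hm : m ≤ N) (v : Fin (2*N) → ℝ) :
    Om (etaV (2*N) m) v = -∑ j : Fin (2*N), (if 2*m ≤ j.val then v j else 0) := by
  rw [Om_repr, ← Finset.sum_neg_distrib]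
  apply Finset.sum_congr rfl
  intro j _
  have hj := j.isLt
  have h1 : (∑ i : Fin (2*N), if i < j then etaV (2*N) m i else 0)
      = if j.val % 2 = 1 ∧ 2*m+1 ≤ j.val then -1 else 0 := by
    simp only [etaV, Fin.lt_def]
    rw [finsum_lt (le_of_lt hj) (fun k => if 2*m ≤ k then -altP k else 0), altP_sum_eta]
  have h2 : (∑ i : Fin (2*N), if j < i then etaV (2*N) m i else 0)
      = (if (2*N) % 2 = 1 ∧ 2*m+1 ≤ 2*N then -1 else 0)
        - (if (j.val+1) % 2 = 1 ∧ 2*m+1 ≤ j.val+1 then -1 else 0) := by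
    simp only [etaV, Fin.lt_def]
    rw [finsum_gt hj (fun k => if 2*m ≤ k then -altP k else 0), altP_sum_eta, altP_sum_eta]
  rw [h1, h2]
  split_ifs <;> first | omega | ring

lemma Om_antisymm {n : ℕ} (u v : Fin n → ℝ) : Om u v = - Om v u := by
  have h : ∀ i j : Fin n, (if i < j then u i * v j - u j * v i else 0)
      = -(if i < j then v i * u j - v j * u i else 0) := by
    intro i j; split_ifs <;> ring
  simp only [Om, h, Finset.sum_neg_distrib]

lemma Om_self {n : ℕ} (u : Fin n → ℝ) : Om u u = 0 := by
  have h : ∀ i j : Fin n, (if i < j then u i * u j - u j * u i else 0) = 0 := by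
    intro i j; split_ifs <;> ring
  simp only [Om, h, Finset.sum_const_zero]

lemma Om_smul_smul {n : ℕ} (c e : ℝ) (u v : Fin n → ℝ) :
    Om (fun i => c * u i) (fun i => e * v i) = c * e * Om u v := by
  have h : ∀ i j : Fin n, (if i < j then (c * u i) * (e * v j) - (c * u j) * (e * v i) else 0)
      = c * e * (if i < j then u i * v j - u j * v i else 0) := by
    intro i j; split_ifs <;> ring
  simp only [Om, h, ← Finset.mul_sum]

lemma Om_smul_left {n : ℕ} (c : ℝ) (u v : Fin n → ℝ) :
    Om (fun i => c * u i) v = c * Om u v := by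
  have h : ∀ i j : Fin n, (if i < j then (c * u i) * v j - (c * u j) * v i else 0)
      = c * (if i < j then u i * v j - u j * v i else 0) := by
    intro i j; split_ifs <;> ring
  simp only [Om, h, ← Finset.mul_sum]

lemma Om_smul_comb {n : ℕ} (c e f : ℝ) (u v w : Fin n → ℝ) :
    Om (fun i => c * u i) (fun i => e * v i + f * w i)
      = c * e * Om u v + c * f * Om u w := by
  have h : ∀ i j : Fin n,
      (if i < j then (c * u i) * (e * v j + f * w j) - (c * u j) * (e * v i + f * w i) else 0)
      = c * e * (if i < j then u i * v j - u j * v i else 0)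
        + c * f * (if i < j then u i * w j - u j * w i else 0) := by
    intro i j; split_ifs <;> ring
  simp only [Om, h, Finset.sum_add_distrib, ← Finset.mul_sum]

lemma Om_comb_comb {n : ℕ} (c d e f : ℝ) (u1 u2 v1 v2 : Fin n → ℝ) :
    Om (fun i => c * u1 i + d * u2 i) (fun i => e * v1 i + f * v2 i)
      = c * e * Om u1 v1 + c * f * Om u1 v2 + d * e * Om u2 v1 + d * f * Om u2 v2 := by
  have h : ∀ i j : Fin n,
      (if i < j then (c * u1 i + d * u2 i) * (e * v1 j + f * v2 j)
          - (c * u1 j + d * u2 j) * (e * v1 i + f * v2 i) else 0)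
      = c * e * (if i < j then u1 i * v1 j - u1 j * v1 i else 0)
        + c * f * (if i < j then u1 i * v2 j - u1 j * v2 i else 0)
        + d * e * (if i < j then u2 i * v1 j - u2 j * v1 i else 0)
        + d * f * (if i < j then u2 i * v2 j - u2 j * v2 i else 0) := by
    intro i j; split_ifs <;> ring
  simp only [Om, h, Finset.sum_add_distrib, ← Finset.mul_sum]

lemma Om_comb_plain {n : ℕ} (c d : ℝ) (u1 u2 v : Fin n → ℝ) :
    Om (fun i => c * u1 i + d * u2 i) v = c * Om u1 v + d * Om u2 v := by
  have h : ∀ i j : Fin n,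
      (if i < j then (c * u1 i + d * u2 i) * v j - (c * u1 j + d * u2 j) * v i else 0)
      = c * (if i < j then u1 i * v j - u1 j * v i else 0)
        + d * (if i < j then u2 i * v j - u2 j * v i else 0) := by
    intro i j; split_ifs <;> ring
  simp only [Om, h, Finset.sum_add_distrib, ← Finset.mul_sum]

lemma Om_add_right {n : ℕ} (u v w : Fin n → ℝ) :
    Om u (fun i => v i + w i) = Om u v + Om u w := by
  have h : ∀ i j : Fin n, (if i < j then u i * (v j + w j) - u j * (v i + w i) else 0)
      = (if i < j then u i * v j - u j * v i else 0)
        + (if i < j then u i * w j - u j * w i else 0) := by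
    intro i j; split_ifs <;> ring
  simp only [Om, h, Finset.sum_add_distrib]

lemma Om_ordered {n K : ℕ} (u v : Fin n → ℝ) (hu : ∀ i : Fin n, K ≤ i.val → u i = 0)
    (hv : ∀ j : Fin n, j.val < K → v j = 0) :
    Om u v = (∑ i, u i) * (∑ j, v j) := by
  rw [Finset.sum_mul_sum]
  apply Finset.sum_congr rfl; intro i _
  apply Finset.sum_congr rfl; intro j _
  by_cases hiK : K ≤ i.val
  · rw [hu i hiK]
    by_cases hij : i < j
    · rw [hu j (le_trans hiK (le_of_lt hij))]
      simp [hij]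
    · simp [hij, hu i hiK]
  · push_neg at hiK
    by_cases hij : i < j
    · rw [hv i hiK]
      simp [hij]
    · rw [hv j (by omega : j.val < K)]
      simp [hij]

lemma pb_eq_Om {n : ℕ} (f g : (Fin n → ℝ) → ℝ) (x : Fin n → ℝ) :
    pb f g x = Om (fun i => x i * pd f x i) (fun i => x i * pd g x i) := by
  simp only [pb, Om]
  apply Finset.sum_congr rfl; intro i _
  apply Finset.sum_congr rfl; intro j _
  split_ifs <;> ring

lemma pb_antisymm {n : ℕ} (f g : (Fin n → ℝ) → ℝ) (x : Fin n → ℝ) :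
    pb f g x = - pb g f x := by
  have h : ∀ i j : Fin n,
      (if i < j then x i * x j * (pd f x i * pd g x j - pd f x j * pd g x i) else 0)
      = -(if i < j then x i * x j * (pd g x i * pd f x j - pd g x j * pd f x i) else 0) := by
    intro i j; split_ifs <;> ring
  simp only [pb, h, Finset.sum_neg_distrib]

lemma Om_eps_eps {N m m' : ℕ} (hm : m ≤ N) :
    Om (epsV (2*N) m) (epsV (2*N) m') = 0 := by
  rw [Om_eps hm]
  have h : (∑ j : Fin (2*N), if j.val < 2*m then epsV (2*N) m' j else 0)
      = ∑ k ∈ Finset.range (2*m), (if k < 2*m' then altP k else 0) :=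
    finsum_lt (by omega) (fun k => if k < 2*m' then altP k else 0)
  rw [h, altP_sum_eps]
  split_ifs with hc
  · omega
  · rfl

lemma Om_eps_eta {N m m' : ℕ} (hm : m ≤ N) :
    Om (epsV (2*N) m) (etaV (2*N) m') = 0 := by
  rw [Om_eps hm]
  have h : (∑ j : Fin (2*N), if j.val < 2*m then etaV (2*N) m' j else 0)
      = ∑ k ∈ Finset.range (2*m), (if 2*m' ≤ k then -altP k else 0) :=
    finsum_lt (by omega) (fun k => if 2*m' ≤ k then -altP k else 0)
  rw [h, altP_sum_eta]
  split_ifs with hc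
  · omega
  · rfl

lemma Om_eps_supp {N m : ℕ} (hm : m ≤ N) (v : Fin (2*N) → ℝ)
    (hv : ∀ j : Fin (2*N), j.val < 2*m → v j = 0) :
    Om (epsV (2*N) m) v = 0 := by
  rw [Om_eps hm]
  apply Finset.sum_eq_zero
  intro j _
  split_ifs with h
  · exact hv j h
  · rfl

lemma Om_eta_eta {N m m' : ℕ} (hm : m ≤ N) :
    Om (etaV (2*N) m) (etaV (2*N) m') = 0 := by
  rw [Om_eta hm]
  have h : (∑ j : Fin (2*N), if 2*m ≤ j.val then etaV (2*N) m' j else 0)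
      = (∑ k ∈ Finset.range (2*N), (if 2*m' ≤ k then -altP k else 0))
        - ∑ k ∈ Finset.range (2*m), (if 2*m' ≤ k then -altP k else 0) :=
    finsum_ge (by omega) (fun k => if 2*m' ≤ k then -altP k else 0)
  rw [h, altP_sum_eta, altP_sum_eta]
  split_ifs <;> first | omega | norm_num

lemma Om_eta_chi {N m m' : ℕ} (hm : m ≤ N) (b : Fin (2*N) → ℝ) :
    Om (etaV (2*N) m) (chiV b m')
      = -(∑ j : Fin (2*N), if 2*m ≤ j.val ∧ j.val < 2*m' then b j else 0) := by
  rw [Om_eta hm]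
  congr 1
  apply Finset.sum_congr rfl
  intro j _
  simp only [chiV]
  split_ifs <;> first | rfl | omega

lemma chiV_supp {n : ℕ} (b : Fin n → ℝ) (m : ℕ) (i : Fin n) (hi : 2*m ≤ i.val) :
    chiV b m i = 0 := by
  simp only [chiV]
  split_ifs <;> first | omega | rfl

lemma Om_chi_eta {N m m' : ℕ} (hm' : m' ≤ N) (hmm' : m ≤ m') (b : Fin (2*N) → ℝ) :
    Om (chiV b m) (etaV (2*N) m') = 0 := by
  rw [Om_antisymm, Om_eta_chi hm']
  rw [Finset.sum_eq_zero, neg_zero, neg_zero]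
  intro j _
  split_ifs <;> first | omega | rfl

lemma Om_chi_chi {n m m' : ℕ} (hmm' : m ≤ m') (b : Fin n → ℝ) :
    Om (chiV b m) (chiV b m')
      = (∑ j, chiV b m j) * (∑ j : Fin n, if 2*m ≤ j.val ∧ j.val < 2*m' then b j else 0) := by
  have hsplit : chiV b m' = fun j => chiV b m j
      + (if 2*m ≤ j.val ∧ j.val < 2*m' then b j else 0) := by
    funext j
    simp only [chiV]
    split_ifs <;> first | omega | ring
  rw [hsplit, Om_add_right, Om_self, zero_add]
  apply Om_ordered (K := 2*m)
  · intro i hi; exact chiV_supp b m i hi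
  · intro j hj; split_ifs <;> first | omega | rfl

lemma chiV_top {N : ℕ} (b : Fin (2*N) → ℝ) : chiV b N = b := by
  funext j
  simp only [chiV]
  split_ifs with h
  · rfl
  · exact absurd j.isLt h

/-! ### Derivative computations -/

def prodS {n : ℕ} (s : Finset (Fin n)) : (Fin n → ℝ) → ℝ := fun x => ∏ i ∈ s, x i

lemma hasFDeriv_prodS {n : ℕ} (s : Finset (Fin n)) (x : Fin n → ℝ) :
    HasFDerivAt (prodS s)
      (∑ i ∈ s, (∏ j ∈ s.erase i, x j) • ContinuousLinearMap.proj (R := ℝ) (φ := fun _ : Fin n => ℝ) i) x :=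
  hasFDerivAt_finset_prod

lemma proj_sum_apply {n : ℕ} (s : Finset (Fin n)) (c : Fin n → ℝ) (i : Fin n) :
    (∑ i' ∈ s, c i' • ContinuousLinearMap.proj (R := ℝ) (φ := fun _ : Fin n => ℝ) i')
        (Pi.single i 1) = if i ∈ s then c i else 0 := by
  rw [ContinuousLinearMap.sum_apply]
  have h : ∀ i' ∈ s, (c i' • ContinuousLinearMap.proj (R := ℝ) (φ := fun _ : Fin n => ℝ) i')
      (Pi.single i 1) = if i' = i then c i' else 0 := by
    intro i' _
    rw [ContinuousLinearMap.smul_apply, ContinuousLinearMap.proj_apply, Pi.single_apply]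
    split_ifs <;> simp
  rw [Finset.sum_congr rfl h, Finset.sum_ite_eq' s i c]

lemma prodS_pos {n : ℕ} (s : Finset (Fin n)) (x : Fin n → ℝ) (hx : ∀ i, 0 < x i) :
    0 < prodS s x := Finset.prod_pos (fun i _ => hx i)

lemma erase_prod {n : ℕ} (s : Finset (Fin n)) (x : Fin n → ℝ) (i : Fin n)
    (hxi : x i ≠ 0) (his : i ∈ s) : ∏ j ∈ s.erase i, x j = prodS s x / x i := by
  rw [eq_div_iff hxi, mul_comm]
  exact Finset.mul_prod_erase s x his

lemma ratio_deriv {n : ℕ} (s t : Finset (Fin n)) (x : Fin n → ℝ) (hx : ∀ i, 0 < x i) :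
    ∃ L : (Fin n → ℝ) →L[ℝ] ℝ, HasFDerivAt (fun y => prodS s y / prodS t y) L x ∧
      ∀ i, x i * L (Pi.single i 1)
        = (((if i ∈ s then (1:ℝ) else 0) - if i ∈ t then 1 else 0)) * (prodS s x / prodS t x) := by
  have hQ : prodS t x ≠ 0 := ne_of_gt (prodS_pos t x hx)
  have hinv : HasDerivAt (fun y : ℝ => y⁻¹) (-(prodS t x ^ 2)⁻¹) (prodS t x) :=
    hasDerivAt_inv hQ
  have h1 : HasFDerivAt (fun y => (prodS t y)⁻¹)
      ((-(prodS t x ^ 2)⁻¹) • (∑ i ∈ t, (∏ j ∈ t.erase i, x j) • ContinuousLinearMap.proj i)) x :=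
    hinv.comp_hasFDerivAt x (hasFDeriv_prodS t x)
  have h2 := (hasFDeriv_prodS s x).fun_mul h1
  refine ⟨_, by simpa only [div_eq_mul_inv] using h2, ?_⟩
  intro i
  have hxi : x i ≠ 0 := ne_of_gt (hx i)
  simp only [ContinuousLinearMap.add_apply, ContinuousLinearMap.smul_apply, proj_sum_apply,
    smul_eq_mul]
  by_cases his : i ∈ s <;> by_cases hit : i ∈ t <;>
    simp only [his, hit, if_true, if_false] <;>
    [ (rw [erase_prod s x i hxi his, erase_prod t x i hxi hit]; field_simp; ring);
      (rw [erase_prod s x i hxi his]; field_simp; ring);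
      (rw [erase_prod t x i hxi hit]; field_simp; ring);
      (field_simp; simp) ]

lemma ind_eps {n m : ℕ} (i : Fin n) :
    ((if i ∈ Finset.univ.filter (fun i : Fin n => i.val < 2*m ∧ Even i.val) then (1:ℝ) else 0)
      - if i ∈ Finset.univ.filter (fun i : Fin n => i.val < 2*m ∧ Odd i.val) then 1 else 0)
      = epsV n m i := by
  simp only [Finset.mem_filter, Finset.mem_univ, true_and, epsV, altP,
    Nat.even_iff, Nat.odd_iff]
  split_ifs <;> first | omega | norm_num

lemma ind_eta {n m : ℕ} (i : Fin n) :
    ((if i ∈ Finset.univ.filter (fun i : Fin n => 2*m ≤ i.val ∧ Odd i.val) then (1:ℝ) else 0)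
      - if i ∈ Finset.univ.filter (fun i : Fin n => 2*m ≤ i.val ∧ Even i.val) then 1 else 0)
      = etaV n m i := by
  simp only [Finset.mem_filter, Finset.mem_univ, true_and, etaV, altP,
    Nat.even_iff, Nat.odd_iff]
  split_ifs <;> first | omega | norm_num

lemma Jfun_pos {n : ℕ} (m : ℕ) (x : Fin n → ℝ) (hx : ∀ i, 0 < x i) : 0 < Jfun m x :=
  div_pos (Finset.prod_pos (fun i _ => hx i)) (Finset.prod_pos (fun i _ => hx i))

lemma Ifun_pos {n : ℕ} (m : ℕ) (x : Fin n → ℝ) (hx : ∀ i, 0 < x i) : 0 < Ifun m x :=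
  div_pos (Finset.prod_pos (fun i _ => hx i)) (Finset.prod_pos (fun i _ => hx i))

lemma U_J {n : ℕ} (m : ℕ) (x : Fin n → ℝ) (hx : ∀ i, 0 < x i) (i : Fin n) :
    x i * pd (Jfun m) x i = Jfun m x * epsV n m i := by
  obtain ⟨L, hL, he⟩ := ratio_deriv (Finset.univ.filter fun i : Fin n => i.val < 2*m ∧ Even i.val)
    (Finset.univ.filter fun i : Fin n => i.val < 2*m ∧ Odd i.val) x hx
  have hfd : fderiv ℝ (Jfun m) x = L := hL.fderiv
  rw [pd, hfd, he i, ind_eps, mul_comm]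
  rfl

lemma U_I {n : ℕ} (m : ℕ) (x : Fin n → ℝ) (hx : ∀ i, 0 < x i) (i : Fin n) :
    x i * pd (Ifun m) x i = Ifun m x * etaV n m i := by
  obtain ⟨L, hL, he⟩ := ratio_deriv (Finset.univ.filter fun i : Fin n => 2*m ≤ i.val ∧ Odd i.val)
    (Finset.univ.filter fun i : Fin n => 2*m ≤ i.val ∧ Even i.val) x hx
  have hfd : fderiv ℝ (Ifun m) x = L := hL.fderiv
  rw [pd, hfd, he i, ind_eta, mul_comm]
  rfl

lemma hasFDeriv_vfun {n : ℕ} (a : Fin n → ℝ) (t : ℕ) (x : Fin n → ℝ) :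
    HasFDerivAt (vfun a t)
      (∑ j ∈ Finset.univ.filter (fun j : Fin n => j.val < t),
        a j • ContinuousLinearMap.proj (R := ℝ) (φ := fun _ : Fin n => ℝ) j) x := by
  apply HasFDerivAt.fun_sum
  intro j _
  exact (ContinuousLinearMap.proj (R := ℝ) (φ := fun _ : Fin n => ℝ) j).hasFDerivAt.const_mul (a j)

lemma U_H {n : ℕ} (a : Fin n → ℝ) (x : Fin n → ℝ) (i : Fin n) :
    x i * pd (fun y => ∑ k, a k * y k) x i = a i * x i := by
  have h : HasFDerivAt (fun y : Fin n → ℝ => ∑ k, a k * y k)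
      (∑ j ∈ (Finset.univ : Finset (Fin n)), a j • ContinuousLinearMap.proj (R := ℝ) (φ := fun _ : Fin n => ℝ) j) x := by
    apply HasFDerivAt.fun_sum
    intro j _
    exact (ContinuousLinearMap.proj (R := ℝ) (φ := fun _ : Fin n => ℝ) j).hasFDerivAt.const_mul (a j)
  rw [pd, h.fderiv, proj_sum_apply]
  simp [mul_comm]

lemma U_F {n : ℕ} (a : Fin n → ℝ) (m : ℕ) (x : Fin n → ℝ) (hx : ∀ i, 0 < x i) (i : Fin n) :
    x i * pd (Ffun a m) x i
      = Ifun m x * chiV (fun k => a k * x k) m i + Ffun a m x * etaV n m i := by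
  obtain ⟨L, hL, he⟩ := ratio_deriv (Finset.univ.filter fun i : Fin n => 2*m ≤ i.val ∧ Odd i.val)
    (Finset.univ.filter fun i : Fin n => 2*m ≤ i.val ∧ Even i.val) x hx
  have hv := hasFDeriv_vfun a (2*m) x
  have h2 := hv.mul hL
  have hfd : fderiv ℝ (Ffun a m) x = _ := h2.fderiv
  rw [pd, hfd]
  rw [ContinuousLinearMap.add_apply, ContinuousLinearMap.smul_apply,
    ContinuousLinearMap.smul_apply, smul_eq_mul, smul_eq_mul, mul_add]
  have e1 : x i * (vfun a (2*m) x * L (Pi.single i 1))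
      = Ffun a m x * etaV n m i := by
    rw [show x i * (vfun a (2*m) x * L (Pi.single i 1))
        = vfun a (2*m) x * (x i * L (Pi.single i 1)) by ring, he i, ind_eta]
    show vfun a (2*m) x * (etaV n m i * Ifun m x) = _
    rw [Ffun]; ring
  have e2 : x i * (prodS (Finset.univ.filter fun i : Fin n => 2*m ≤ i.val ∧ Odd i.val) x /
        prodS (Finset.univ.filter fun i : Fin n => 2*m ≤ i.val ∧ Even i.val) x *
        (∑ j ∈ Finset.univ.filter (fun j : Fin n => j.val < 2*m),
          a j • ContinuousLinearMap.proj (R := ℝ) j) (Pi.single i 1))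
      = Ifun m x * chiV (fun k => a k * x k) m i := by
    rw [proj_sum_apply]
    simp only [Finset.mem_filter, Finset.mem_univ, true_and, chiV]
    show x i * (Ifun m x * _) = _
    split_ifs <;> ring
  rw [e1, e2]
  ring

lemma Om_eta_b {N m : ℕ} (hm : m ≤ N) (b : Fin (2*N) → ℝ) :
    Om (etaV (2*N) m) b
      = -(∑ j : Fin (2*N), if 2*m ≤ j.val ∧ j.val < 2*N then b j else 0) := by
  rw [Om_eta hm]
  congr 1
  apply Finset.sum_congr rfl
  intro j _
  have hj := j.isLt
  split_ifs <;> first | rfl | omega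

lemma Om_chi_b {N m : ℕ} (hm : m < N) (b : Fin (2*N) → ℝ) :
    Om (chiV b m) b
      = (∑ j, chiV b m j) * (∑ j : Fin (2*N), if 2*m ≤ j.val ∧ j.val < 2*N then b j else 0) := by
  have h := Om_chi_chi (n := 2*N) (m := m) (m' := N) (by omega) b
  rw [chiV_top] at h
  exact h

lemma vfun_chi {n : ℕ} (a : Fin n → ℝ) (m : ℕ) (x : Fin n → ℝ) :
    vfun a (2*m) x = ∑ j, chiV (fun k => a k * x k) m j := by
  rw [vfun, Finset.sum_filter]
  rfl

/-- Theorem 4.1 of the paper: for even `n = 2N`, `a ≠ 0`, `ℓ` the smallest index with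
`a_{ℓ+1} ≠ 0` (0-based: `a ℓ ≠ 0`) and `λ = ⌊ℓ/2⌋`, the `N` functions
`J_1,…,J_λ, F_{λ+1},…,F_{N−1}, H_0` are pairwise in involution and functionally independent. -/
theorem stmt_3 (N : ℕ) (a : Fin (2*N) → ℝ) (ha : a ≠ 0)
    (ℓ : ℕ) (hℓ : ℓ < 2*N) (hℓ1 : a ⟨ℓ, hℓ⟩ ≠ 0)
    (hℓ0 : ∀ j : Fin (2*N), j.val < ℓ → a j = 0)
    (G : Fin N → (Fin (2*N) → ℝ) → ℝ)
    (hG : ∀ p : Fin N, G p =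
      if p.val < ℓ/2 then Jfun (p.val+1)
      else if p.val < N - 1 then Ffun a (p.val+1)
      else fun x => ∑ i, a i * x i) :
    (∀ p q : Fin N, ∀ x : Fin (2*N) → ℝ, (∀ i, 0 < x i) → pb (G p) (G q) x = 0) ∧
    (∃ x : Fin (2*N) → ℝ, (∀ i, 0 < x i) ∧
      LinearIndependent ℝ (fun p : Fin N => fun i : Fin (2*N) => pd (G p) x i)) := by
  have hNpos : 0 < N := by omega
  set lam := ℓ/2 with hlamdef
  have hlamN : lam < N := by omega
  have hGJ : ∀ p : Fin N, p.val < lam → G p = Jfun (p.val+1) := by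
    intro p hp; rw [hG p, if_pos hp]
  have hGF : ∀ p : Fin N, lam ≤ p.val → p.val < N-1 → G p = Ffun a (p.val+1) := by
    intro p h1 h2; rw [hG p, if_neg (by omega), if_pos h2]
  have hGH : ∀ p : Fin N, N-1 ≤ p.val → G p = fun y => ∑ i, a i * y i := by
    intro p h1; rw [hG p, if_neg (by omega), if_neg (by omega)]
  have hUJ : ∀ (x : Fin (2*N) → ℝ), (∀ i, 0 < x i) → ∀ p : Fin N, p.val < lam →
      (fun i => x i * pd (G p) x i)
        = fun i => Jfun (p.val+1) x * epsV (2*N) (p.val+1) i := by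
    intro x hx p hp; rw [hGJ p hp]; funext i; exact U_J _ x hx i
  have hUF : ∀ (x : Fin (2*N) → ℝ), (∀ i, 0 < x i) → ∀ p : Fin N,
      lam ≤ p.val → p.val < N-1 →
      (fun i => x i * pd (G p) x i)
        = fun i => Ifun (p.val+1) x * chiV (fun k => a k * x k) (p.val+1) i
            + Ffun a (p.val+1) x * etaV (2*N) (p.val+1) i := by
    intro x hx p hp1 hp2; rw [hGF p hp1 hp2]; funext i; exact U_F a _ x hx i
  have hUH : ∀ (x : Fin (2*N) → ℝ), (∀ i, 0 < x i) → ∀ p : Fin N, N-1 ≤ p.val →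
      (fun i => x i * pd (G p) x i) = fun i => a i * x i := by
    intro x hx p hp; rw [hGH p hp]; funext i; exact U_H a x i
  have hUJp : ∀ (x : Fin (2*N) → ℝ), (hx : ∀ i, 0 < x i) → ∀ p : Fin N, p.val < lam →
      ∀ i, x i * pd (G p) x i = Jfun (p.val+1) x * epsV (2*N) (p.val+1) i := by
    intro x hx p hp i; rw [hGJ p hp]; exact U_J _ x hx i
  have hUFp : ∀ (x : Fin (2*N) → ℝ), (hx : ∀ i, 0 < x i) → ∀ p : Fin N,
      lam ≤ p.val → p.val < N-1 → ∀ i,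
      x i * pd (G p) x i = Ifun (p.val+1) x * chiV (fun k => a k * x k) (p.val+1) i
          + Ffun a (p.val+1) x * etaV (2*N) (p.val+1) i := by
    intro x hx p hp1 hp2 i; rw [hGF p hp1 hp2]; exact U_F a _ x hx i
  have hUHp : ∀ (x : Fin (2*N) → ℝ), (hx : ∀ i, 0 < x i) → ∀ p : Fin N, N-1 ≤ p.val →
      ∀ i, x i * pd (G p) x i = a i * x i := by
    intro x hx p hp i; rw [hGH p hp]; exact U_H a x i
  have hinv : ∀ p q : Fin N, p.val ≤ q.val → ∀ x : Fin (2*N) → ℝ,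
      (∀ i, 0 < x i) → pb (G p) (G q) x = 0 := by
    intro p q hpq x hx
    have hxx := hx
    rcases lt_or_ge p.val lam with hp | hp
    · rcases lt_or_ge q.val lam with hq | hq
      · rw [pb_eq_Om, hUJ x hx p hp, hUJ x hx q hq, Om_smul_smul,
          Om_eps_eps (by omega : p.val + 1 ≤ N), mul_zero]
      · rcases lt_or_ge q.val (N-1) with hq2 | hq2
        · rw [pb_eq_Om, hUJ x hx p hp, hUF x hx q hq hq2, Om_smul_comb,
            Om_eps_supp (by omega : p.val+1 ≤ N) _
              (fun j hj => by
                simp only [chiV]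
                have : a j = 0 := hℓ0 j (by omega)
                split_ifs <;> simp [this]),
            Om_eps_eta (by omega : p.val+1 ≤ N)]
          ring
        · rw [pb_eq_Om, hUJ x hx p hp, hUH x hx q hq2, Om_smul_left,
            Om_eps_supp (by omega : p.val+1 ≤ N) _
              (fun j hj => by rw [hℓ0 j (by omega), zero_mul]), mul_zero]
    · rcases lt_or_ge p.val (N-1) with hp2 | hp2
      · rcases lt_or_ge q.val (N-1) with hq2 | hq2
        · rw [pb_eq_Om, hUF x hx p hp hp2, hUF x hx q (by omega) hq2, Om_comb_comb,
            Om_chi_chi (by omega : p.val+1 ≤ q.val+1),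
            Om_chi_eta (by omega : q.val+1 ≤ N) (by omega : p.val+1 ≤ q.val+1),
            Om_eta_chi (by omega : p.val+1 ≤ N),
            Om_eta_eta (by omega : p.val+1 ≤ N)]
          simp only [Ffun]
          rw [← vfun_chi]
          ring
        · rw [pb_eq_Om, hUF x hx p hp hp2, hUH x hx q hq2, Om_comb_plain,
            Om_chi_b (by omega : p.val+1 < N), Om_eta_b (by omega : p.val+1 ≤ N)]
          simp only [Ffun]
          rw [← vfun_chi]
          ring
      · rw [pb_eq_Om, hUH x hx p hp2, hUH x hx q (by omega), Om_self]
  constructor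
  · intro p q x hx
    rcases le_total p.val q.val with h | h
    · exact hinv p q h x hx
    · rw [pb_antisymm, hinv q p h x hx, neg_zero]
  · -- functional independence
    have haℓpos : 0 < |a ⟨ℓ, hℓ⟩| := abs_pos.mpr hℓ1
    set S := ∑ i, |a i| with hSdef
    have hS0 : 0 ≤ S := Finset.sum_nonneg (fun i _ => abs_nonneg _)
    set δ := |a ⟨ℓ, hℓ⟩| / (2*(1+S)) with hδdef
    have hδpos : 0 < δ := div_pos haℓpos (by linarith)
    set x : Fin (2*N) → ℝ := fun i => if i.val = ℓ then 1 else δ with hxdef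
    have hx : ∀ i, 0 < x i := by
      intro i
      simp only [hxdef]
      split_ifs
      · norm_num
      · exact hδpos
    have hxℓ : x ⟨ℓ, hℓ⟩ = 1 := by simp [hxdef]
    have hxother : ∀ i : Fin (2*N), i.val ≠ ℓ → x i = δ := by
      intro i hi; simp [hxdef, hi]
    refine ⟨x, hx, ?_⟩
    rw [Fintype.linearIndependent_iff]
    intro g hg
    have hco : ∀ i : Fin (2*N), (∑ p : Fin N, g p * (x i * pd (G p) x i)) = 0 := by
      intro i
      have h1 := congrFun hg i
      simp only [Finset.sum_apply, Pi.smul_apply, smul_eq_mul, Pi.zero_apply] at h1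
      have h2 : (∑ p : Fin N, g p * (x i * pd (G p) x i))
          = x i * ∑ p : Fin N, g p * pd (G p) x i := by
        rw [Finset.mul_sum]
        apply Finset.sum_congr rfl
        intro p _
        ring
      rw [h2, h1, mul_zero]
    set A : Finset (Fin N) := Finset.univ.filter (fun p : Fin N => p.val < lam) with hAdef
    set B : Finset (Fin N) := Finset.univ.filter (fun p : Fin N => lam ≤ p.val ∧ p.val < N-1)
      with hBdef
    set pH : Fin N := ⟨N-1, by omega⟩ with hpHdef
    have hpHval : pH.val = N-1 := rfl
    have hsplit3 : ∀ h : Fin N → ℝ,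
        (∑ p : Fin N, h p) = ∑ p ∈ A, h p + ∑ p ∈ B, h p + h pH := by
      intro h
      rw [← Finset.sum_filter_add_sum_filter_not Finset.univ (fun p : Fin N => p.val < lam) h]
      have e2 : Finset.univ.filter (fun p : Fin N => ¬ p.val < lam) = B ∪ {pH} := by
        ext p
        simp only [Finset.mem_filter, Finset.mem_univ, true_and, Finset.mem_union,
          Finset.mem_singleton, hBdef, hpHdef, Fin.ext_iff]
        have := p.isLt
        omega
      have hdisj : Disjoint B {pH} := by
        rw [Finset.disjoint_singleton_right]
        simp only [hBdef, Finset.mem_filter, Finset.mem_univ, true_and, hpHval]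
        omega
      rw [e2, Finset.sum_union hdisj, Finset.sum_singleton, add_assoc]
    have key : ∀ i : Fin (2*N),
        ∑ p ∈ A, g p * (Jfun (p.val+1) x * epsV (2*N) (p.val+1) i)
        + ∑ p ∈ B, g p * (Ifun (p.val+1) x * chiV (fun k => a k * x k) (p.val+1) i
            + Ffun a (p.val+1) x * etaV (2*N) (p.val+1) i)
        + g pH * (a i * x i) = 0 := by
      intro i
      have h0 := hco i
      rw [hsplit3 (fun p => g p * (x i * pd (G p) x i))] at h0
      rw [← h0]
      congr 1
      · congr 1
        · apply Finset.sum_congr rfl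
          intro p hp
          have hp' : p.val < lam := by
            simpa only [hAdef, Finset.mem_filter, Finset.mem_univ, true_and] using hp
          rw [hUJp x hx p hp' i]
        · apply Finset.sum_congr rfl
          intro p hp
          have hp' : lam ≤ p.val ∧ p.val < N-1 := by
            simpa only [hBdef, Finset.mem_filter, Finset.mem_univ, true_and] using hp
          rw [hUFp x hx p hp'.1 hp'.2 i]
      · rw [hUHp x hx pH (by omega) i]
    -- Step 1 : the J-coefficients vanish
    have SJ : ∀ k : ℕ, k ≤ lam →
        ∑ p ∈ A.filter (fun p => k ≤ p.val), g p * Jfun (p.val+1) x = 0 := by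
      intro k hk
      rcases eq_or_lt_of_le hk with heq | hlt
      · have he : A.filter (fun p => k ≤ p.val) = ∅ := by
          ext p
          simp only [Finset.mem_filter, Finset.mem_univ, true_and, hAdef,
            Finset.notMem_empty, iff_false, not_and]
          omega
        rw [he, Finset.sum_empty]
      · set i₀ : Fin (2*N) := ⟨2*k+1, by omega⟩ with hi₀def
        have hi₀val : i₀.val = 2*k+1 := rfl
        have hai₀ : a i₀ = 0 := hℓ0 i₀ (by rw [hi₀val]; omega)
        have hk0 := key i₀
        have hB0 : ∑ p ∈ B, g p * (Ifun (p.val+1) x * chiV (fun k' => a k' * x k') (p.val+1) i₀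
            + Ffun a (p.val+1) x * etaV (2*N) (p.val+1) i₀) = 0 := by
          apply Finset.sum_eq_zero
          intro p hp
          have hp' : lam ≤ p.val ∧ p.val < N-1 := by
            simpa only [hBdef, Finset.mem_filter, Finset.mem_univ, true_and] using hp
          have hchi : chiV (fun k' => a k' * x k') (p.val+1) i₀ = 0 := by
            simp only [chiV, hai₀, zero_mul, ite_self]
          have heta : etaV (2*N) (p.val+1) i₀ = 0 := by
            simp only [etaV, hi₀val]
            rw [if_neg (by omega)]
          rw [hchi, heta]
          ring
        have hH0 : g pH * (a i₀ * x i₀) = 0 := by rw [hai₀]; ring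
        rw [hB0, hH0, add_zero, add_zero] at hk0
        have e1 : ∀ p ∈ A, g p * (Jfun (p.val+1) x * epsV (2*N) (p.val+1) i₀)
            = (if k ≤ p.val then -(g p * Jfun (p.val+1) x) else 0) := by
          intro p hp
          have heps : epsV (2*N) (p.val+1) i₀ = if k ≤ p.val then -1 else 0 := by
            simp only [epsV, hi₀val, altP]
            split_ifs <;> first | omega | norm_num | rfl
          rw [heps]
          split_ifs <;> ring
        rw [Finset.sum_congr rfl e1, ← Finset.sum_filter, Finset.sum_neg_distrib,
          neg_eq_zero] at hk0
        exact hk0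
    have hA0 : ∀ p : Fin N, p.val < lam → g p = 0 := by
      intro p hp
      have h1 := SJ p.val (by omega)
      have h2 := SJ (p.val+1) (by omega)
      have hins : A.filter (fun q => p.val ≤ q.val)
          = insert p (A.filter (fun q => p.val+1 ≤ q.val)) := by
        ext q
        simp only [Finset.mem_filter, Finset.mem_univ, true_and, hAdef, Finset.mem_insert,
          Fin.ext_iff]
        omega
      rw [hins, Finset.sum_insert (by
        simp only [Finset.mem_filter, Finset.mem_univ, true_and, hAdef]
        omega), h2, add_zero] at h1
      rcases mul_eq_zero.mp h1 with h | h
      · exact h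
      · exact absurd h (ne_of_gt (Jfun_pos (p.val+1) x hx))
    -- Step 2 : the ℓ-th coordinate equation
    have hD : ∑ p ∈ B, g p * Ifun (p.val+1) x + g pH = 0 := by
      have hk := key ⟨ℓ, hℓ⟩
      have eA : ∑ p ∈ A, g p * (Jfun (p.val+1) x * epsV (2*N) (p.val+1) ⟨ℓ, hℓ⟩) = 0 :=
        Finset.sum_eq_zero (fun p hp => by
          rw [hA0 p (by simpa only [hAdef, Finset.mem_filter, Finset.mem_univ, true_and]
            using hp)]
          ring)
      have eB : ∀ p ∈ B, g p * (Ifun (p.val+1) x * chiV (fun k => a k * x k) (p.val+1) ⟨ℓ, hℓ⟩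
            + Ffun a (p.val+1) x * etaV (2*N) (p.val+1) ⟨ℓ, hℓ⟩)
          = g p * Ifun (p.val+1) x * a ⟨ℓ, hℓ⟩ := by
        intro p hp
        have hp' : lam ≤ p.val ∧ p.val < N-1 := by
          simpa only [hBdef, Finset.mem_filter, Finset.mem_univ, true_and] using hp
        have hchi : chiV (fun k => a k * x k) (p.val+1) ⟨ℓ, hℓ⟩ = a ⟨ℓ, hℓ⟩ := by
          simp only [chiV]
          rw [if_pos (by show ℓ < 2*(p.val+1); omega), hxℓ, mul_one]
        have heta : etaV (2*N) (p.val+1) ⟨ℓ, hℓ⟩ = 0 := by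
          simp only [etaV]
          rw [if_neg (by show ¬ 2*(p.val+1) ≤ ℓ; omega)]
        rw [hchi, heta]
        ring
      rw [Finset.sum_congr rfl eB, eA, zero_add, hxℓ] at hk
      have hfac : (∑ p ∈ B, g p * Ifun (p.val+1) x + g pH) * a ⟨ℓ, hℓ⟩ = 0 := by
        rw [add_mul, Finset.sum_mul]
        linear_combination hk
      rcases mul_eq_zero.mp hfac with h | h
      · exact h
      · exact absurd h hℓ1
    -- nonvanishing of the perturbed partial sums
    have hTnz : ∀ m : ℕ, lam < m → m ≤ N → ∀ j : Fin (2*N),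
        vfun a (2*m) x + δ * a j ≠ 0 := by
      intro m hm hmN j
      have hiℓmem : (⟨ℓ, hℓ⟩ : Fin (2*N)) ∈
          Finset.univ.filter (fun k : Fin (2*N) => k.val < 2*m) := by
        simp only [Finset.mem_filter, Finset.mem_univ, true_and]
        omega
      have hv : vfun a (2*m) x = a ⟨ℓ, hℓ⟩
          + δ * ∑ k ∈ (Finset.univ.filter (fun k : Fin (2*N) => k.val < 2*m)).erase ⟨ℓ, hℓ⟩,
              a k := by
        rw [vfun, ← Finset.add_sum_erase _ (fun k => a k * x k) hiℓmem, hxℓ, mul_one]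
        congr 1
        rw [Finset.mul_sum]
        apply Finset.sum_congr rfl
        intro k hk
        have hkℓ : k.val ≠ ℓ := by
          intro hkk
          have hkk' : k = ⟨ℓ, hℓ⟩ := Fin.ext hkk
          rw [hkk'] at hk
          exact absurd hk (Finset.notMem_erase _ _)
        rw [hxother k hkℓ]
        ring
      set R := ∑ k ∈ (Finset.univ.filter (fun k : Fin (2*N) => k.val < 2*m)).erase ⟨ℓ, hℓ⟩,
          a k with hRdef
      have hRb : |R| ≤ S := by
        calc |R| ≤ ∑ k ∈ (Finset.univ.filter
              (fun k : Fin (2*N) => k.val < 2*m)).erase ⟨ℓ, hℓ⟩, |a k| :=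
            Finset.abs_sum_le_sum_abs _ _
        _ ≤ S := Finset.sum_le_sum_of_subset_of_nonneg (Finset.subset_univ _)
            (fun k _ _ => abs_nonneg _)
      have hjb : |a j| ≤ S := Finset.single_le_sum (f := fun k => |a k|)
          (fun k _ => abs_nonneg _) (Finset.mem_univ j)
      have hsmall : |δ * (R + a j)| < |a ⟨ℓ, hℓ⟩| := by
        rw [abs_mul, abs_of_pos hδpos]
        have h1 : |R + a j| ≤ 2*S := by
          calc |R + a j| ≤ |R| + |a j| := abs_add_le _ _
          _ ≤ 2*S := by linarith
        calc δ * |R + a j| ≤ δ * (2*S) := by nlinarith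
        _ < |a ⟨ℓ, hℓ⟩| := by
            rw [hδdef, div_mul_eq_mul_div, div_lt_iff₀ (by linarith : (0:ℝ) < 2*(1+S))]
            nlinarith
      intro heq
      rw [hv] at heq
      have hre : a ⟨ℓ, hℓ⟩ = -(δ * (R + a j)) := by linear_combination heq
      rw [hre, abs_neg] at hsmall
      exact absurd hsmall (lt_irrefl _)
    -- Step 3 : the F-coefficients vanish
    have hBzero : ∀ t : ℕ, ∀ p : Fin N, lam ≤ p.val → p.val < N-1 → p.val < lam + t →
        g p = 0 := by
      intro t
      induction t with
      | zero => intro p _ _ h3; omega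
      | succ t ih =>
        intro p hp1 hp2 hp3
        rcases lt_or_ge p.val (lam+t) with hlt | hge
        · exact ih p hp1 hp2 hlt
        set i₀ : Fin (2*N) := ⟨2*(p.val+1), by omega⟩ with hi₀def
        have hi₀val : i₀.val = 2*(p.val+1) := rfl
        have hk := key i₀
        have hi₀ℓ : i₀.val ≠ ℓ := by rw [hi₀val]; omega
        have hxi₀ : x i₀ = δ := hxother i₀ hi₀ℓ
        have eA : ∑ q ∈ A, g q * (Jfun (q.val+1) x * epsV (2*N) (q.val+1) i₀) = 0 :=
          Finset.sum_eq_zero (fun q hq => by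
            rw [hA0 q (by simpa only [hAdef, Finset.mem_filter, Finset.mem_univ, true_and]
              using hq)]
            ring)
        have eB : ∀ q ∈ B,
            g q * (Ifun (q.val+1) x * chiV (fun k => a k * x k) (q.val+1) i₀
              + Ffun a (q.val+1) x * etaV (2*N) (q.val+1) i₀)
            = (a i₀ * δ) * (if p.val+1 ≤ q.val then g q * Ifun (q.val+1) x else 0)
              - (if q.val < p.val+1 then g q * Ffun a (q.val+1) x else 0) := by
          intro q hq
          have hchi : chiV (fun k => a k * x k) (q.val+1) i₀
              = if p.val+1 ≤ q.val then a i₀ * δ else 0 := by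
            simp only [chiV, hi₀val, hxi₀]
            split_ifs <;> first | omega | rfl
          have heta : etaV (2*N) (q.val+1) i₀ = if q.val < p.val+1 then -1 else 0 := by
            simp only [etaV, hi₀val, altP]
            split_ifs <;> first | omega | norm_num | rfl
          rw [hchi, heta]
          split_ifs <;> ring
        rw [Finset.sum_congr rfl eB, eA, zero_add, hxi₀, Finset.sum_sub_distrib,
          ← Finset.mul_sum] at hk
        have hdec : ∑ q ∈ B, (if p.val+1 ≤ q.val then g q * Ifun (q.val+1) x else 0)
            = ∑ q ∈ B, g q * Ifun (q.val+1) x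
              - ∑ q ∈ B, (if q.val < p.val+1 then g q * Ifun (q.val+1) x else 0) := by
          rw [← Finset.sum_sub_distrib]
          apply Finset.sum_congr rfl
          intro q _
          split_ifs <;> first | omega | ring
        rw [hdec] at hk
        have hDH : ∑ q ∈ B, g q * Ifun (q.val+1) x = -g pH := by linarith [hD]
        rw [hDH] at hk
        have hWsum : ∑ q ∈ B, (if q.val < p.val+1 then
              g q * Ifun (q.val+1) x * (vfun a (2*(q.val+1)) x + δ * a i₀) else 0) = 0 := by
          have e : ∀ q ∈ B, (if q.val < p.val+1 then
                g q * Ifun (q.val+1) x * (vfun a (2*(q.val+1)) x + δ * a i₀) else 0)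
              = (if q.val < p.val+1 then g q * Ffun a (q.val+1) x else 0)
                + (a i₀ * δ) * (if q.val < p.val+1 then g q * Ifun (q.val+1) x else 0) := by
            intro q _
            simp only [Ffun]
            split_ifs <;> ring
          rw [Finset.sum_congr rfl e, Finset.sum_add_distrib, ← Finset.mul_sum]
          linear_combination -hk
        have hCp : B.filter (fun q => q.val < p.val+1)
            = insert p (B.filter (fun q => q.val < p.val)) := by
          ext q
          simp only [Finset.mem_filter, Finset.mem_univ, true_and, hBdef, Finset.mem_insert,
            Fin.ext_iff]
          omega
        rw [← Finset.sum_filter, hCp, Finset.sum_insert (by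
          simp only [Finset.mem_filter, Finset.mem_univ, true_and, hBdef]
          omega)] at hWsum
        have hrest : ∑ q ∈ B.filter (fun q => q.val < p.val),
            g q * Ifun (q.val+1) x * (vfun a (2*(q.val+1)) x + δ * a i₀) = 0 :=
          Finset.sum_eq_zero (fun q hq => by
            have hq' : (lam ≤ q.val ∧ q.val < N-1) ∧ q.val < p.val := by
              simpa only [hBdef, Finset.mem_filter, Finset.mem_univ, true_and, and_assoc]
                using hq
            rw [ih q hq'.1.1 hq'.1.2 (by omega)]
            ring)
        rw [hrest, add_zero] at hWsum
        rcases mul_eq_zero.mp hWsum with h | h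
        · rcases mul_eq_zero.mp h with h' | h'
          · exact h'
          · exact absurd h' (ne_of_gt (Ifun_pos (p.val+1) x hx))
        · exact absurd h (hTnz (p.val+1) (by omega) (by omega) i₀)
    intro p
    rcases lt_or_ge p.val lam with hp | hp
    · exact hA0 p hp
    rcases lt_or_ge p.val (N-1) with hp2 | hp2
    · exact hBzero N p hp hp2 (by omega)
    · have hppH : p = pH := Fin.ext (by rw [hpHval]; omega)
      have hBsum : ∑ q ∈ B, g q * Ifun (q.val+1) x = 0 :=
        Finset.sum_eq_zero (fun q hq => by
          have hq' : lam ≤ q.val ∧ q.val < N-1 := by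
            simpa only [hBdef, Finset.mem_filter, Finset.mem_univ, true_and] using hq
          rw [hBzero N q hq'.1 hq'.2 (by omega)]
          ring)
      rw [hppH]
      linarith [hD, hBsum]
end

section
/- Let n be even and 1 ≤ m ≤ n/2. For the function I_m(x) = (x_{2m+2} x_{2m+4} ⋯ x_n)/(x_{2m+1} x_{2m+3} ⋯ x_{n−1}) (with I_{n/2} = 1) and every x in the positive orthant (0,∞)^n, the log-canonical Poisson bracket satisfies {I_m, x_j}(x) = −I_m(x) x_j if j > 2m, and {I_m, x_j}(x) = 0 if j ≤ 2m. -/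
/-- derivative of a product of coordinates -/
lemma pd_prod {n : ℕ} (s : Finset (Fin n)) (x : Fin n → ℝ) (i : Fin n) :
    pd (fun y => ∏ k ∈ s, y k) x i = if i ∈ s then ∏ k ∈ s.erase i, x k else 0 := by
  have h : HasFDerivAt (fun y : Fin n → ℝ => ∏ k ∈ s, y k)
      (∑ k ∈ s, (∏ l ∈ s.erase k, x l) • (ContinuousLinearMap.proj k : (Fin n → ℝ) →L[ℝ] ℝ)) x :=
    HasFDerivAt.finset_prod (fun k _ => hasFDerivAt_apply k x)
  rw [pd, h.fderiv]
  simp only [ContinuousLinearMap.coe_sum', Finset.sum_apply, ContinuousLinearMap.coe_smul',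
    Pi.smul_apply, ContinuousLinearMap.proj_apply, Pi.single_apply, smul_eq_mul, mul_ite,
    mul_one, mul_zero]
  rw [Finset.sum_ite_eq' s i (fun k => ∏ l ∈ s.erase k, x l)]

noncomputable def esgn (m i : ℕ) : ℝ := if 2*m ≤ i then (if Odd i then 1 else -1) else 0

lemma Fsum (m t : ℕ) : ∑ i ∈ Finset.range t, esgn m i
    = if 2*m < t ∧ Odd t then (-1:ℝ) else 0 := by
  induction t with
  | zero => simp
  | succ t ih =>
    rw [Finset.sum_range_succ, ih]
    unfold esgn
    simp only [Nat.odd_iff] at *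
    split_ifs <;> first | omega | norm_num

lemma key {n : ℕ} (m : ℕ) (x : Fin n → ℝ) (hx : ∀ i, 0 < x i) (i : Fin n) :
    x i * pd (Ifun m) x i = Ifun m x * esgn m i.val := by
  classical
  set SO := Finset.univ.filter (fun i : Fin n => 2*m ≤ i.val ∧ Odd i.val) with hSO
  set SE := Finset.univ.filter (fun i : Fin n => 2*m ≤ i.val ∧ Even i.val) with hSE
  set P : (Fin n → ℝ) → ℝ := fun y => ∏ k ∈ SO, y k with hP
  set Q : (Fin n → ℝ) → ℝ := fun y => ∏ k ∈ SE, y k with hQ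
  have hQpos : 0 < Q x := Finset.prod_pos (fun k _ => hx k)
  have hQ0 : Q x ≠ 0 := hQpos.ne'
  have hP' : HasFDerivAt P
      (∑ k ∈ SO, (∏ l ∈ SO.erase k, x l) • (ContinuousLinearMap.proj k : (Fin n → ℝ) →L[ℝ] ℝ)) x :=
    HasFDerivAt.finset_prod (fun k _ => hasFDerivAt_apply k x)
  have hQ' : HasFDerivAt Q
      (∑ k ∈ SE, (∏ l ∈ SE.erase k, x l) • (ContinuousLinearMap.proj k : (Fin n → ℝ) →L[ℝ] ℝ)) x :=
    HasFDerivAt.finset_prod (fun k _ => hasFDerivAt_apply k x)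
  have hP2 : HasFDerivAt P (fderiv ℝ P x) x := hP'.differentiableAt.hasFDerivAt
  have hQ2 : HasFDerivAt Q (fderiv ℝ Q x) x := hQ'.differentiableAt.hasFDerivAt
  have hInv : HasFDerivAt (fun y => (Q y)⁻¹)
      ((ContinuousLinearMap.smulRight (1 : ℝ →L[ℝ] ℝ) (-(Q x ^ 2)⁻¹)).comp (fderiv ℝ Q x)) x :=
    (hasFDerivAt_inv hQ0).comp x hQ2
  have hI : HasFDerivAt (Ifun (n := n) m)
      (P x • ((ContinuousLinearMap.smulRight (1 : ℝ →L[ℝ] ℝ) (-(Q x ^ 2)⁻¹)).comp (fderiv ℝ Q x))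
        + (Q x)⁻¹ • fderiv ℝ P x) x := by
    have := hP2.mul hInv
    have hIff : Ifun (n := n) m = fun y => P y * (Q y)⁻¹ := by
      funext y; simp [Ifun, hP, hQ, hSO, hSE, div_eq_mul_inv]
    rw [hIff]
    exact this
  have e1 : fderiv ℝ P x (Pi.single i 1) = if i ∈ SO then ∏ k ∈ SO.erase i, x k else 0 := by
    rw [← pd]; exact pd_prod SO x i
  have e2 : fderiv ℝ Q x (Pi.single i 1) = if i ∈ SE then ∏ k ∈ SE.erase i, x k else 0 := by
    rw [← pd]; exact pd_prod SE x i
  have e3 : pd (Ifun m) x i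
      = P x * (fderiv ℝ Q x (Pi.single i 1) * (-(Q x ^ 2)⁻¹)) + (Q x)⁻¹ * fderiv ℝ P x (Pi.single i 1) := by
    rw [pd, hI.fderiv]
    simp [ContinuousLinearMap.smulRight_apply, smul_eq_mul]
  have hIval : Ifun m x = P x / Q x := rfl
  have hmemO : i ∈ SO ↔ 2*m ≤ i.val ∧ Odd i.val := by simp [hSO]
  have hmemE : i ∈ SE ↔ 2*m ≤ i.val ∧ Even i.val := by simp [hSE]
  rw [e3, e1, e2, hIval]
  unfold esgn
  by_cases hle : 2*m ≤ i.val
  · rcases Nat.even_or_odd i.val with hev | hod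
    · have h1 : i ∉ SO := by simp [hmemO, Nat.odd_iff, Nat.even_iff.mp hev]
      have h2 : i ∈ SE := hmemE.mpr ⟨hle, hev⟩
      have h3 : ¬ Odd i.val := by simp [Nat.odd_iff, Nat.even_iff.mp hev]
      rw [if_pos h2, if_neg h1, if_pos hle, if_neg h3]
      have hx2 : (∏ k ∈ SE.erase i, x k) = Q x / x i := by
        rw [eq_div_iff (hx i).ne']
        rw [mul_comm]
        exact Finset.mul_prod_erase SE x h2
      rw [hx2]
      field_simp [(hx i).ne']
      ring
    · have h1 : i ∈ SO := hmemO.mpr ⟨hle, hod⟩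
      have h2 : i ∉ SE := by
        simp only [hmemE, Finset.mem_filter]
        rintro ⟨-, hev⟩; exact (Nat.not_odd_iff_even.mpr hev) hod
      rw [if_pos h1, if_neg h2, if_pos hle, if_pos hod]
      have hx1 : (∏ k ∈ SO.erase i, x k) = P x / x i := by
        rw [eq_div_iff (hx i).ne']
        rw [mul_comm]
        exact Finset.mul_prod_erase SO x h1
      rw [hx1]
      field_simp [(hx i).ne']
      ring
  · have h1 : i ∉ SO := by simp [hmemO, hle]
    have h2 : i ∉ SE := by simp [hmemE, hle]
    rw [if_neg h1, if_neg h2, if_neg hle]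
    ring


/-- For even `n = 2N` and `1 ≤ m ≤ N`: `{I_m, x_j} = −I_m x_j` for (1-based) `j > 2m`
(0-based `2m ≤ j.val`) and `{I_m, x_j} = 0` for `j ≤ 2m`. -/
theorem stmt_5 (N : ℕ) (m : ℕ) (hm1 : 1 ≤ m) (hm2 : m ≤ N)
    (x : Fin (2*N) → ℝ) (hx : ∀ i, 0 < x i) (j : Fin (2*N)) :
    (2*m ≤ j.val → pb (Ifun m) (fun y => y j) x = -(Ifun m x * x j)) ∧
    (j.val < 2*m → pb (Ifun m) (fun y => y j) x = 0) := by
  classical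
  have hjlt : j.val < 2*N := j.isLt
  have hg : ∀ k : Fin (2*N), pd (fun y : Fin (2*N) → ℝ => y j) x k = if k = j then 1 else 0 := by
    intro k
    rw [pd, (hasFDerivAt_apply j x).fderiv]
    simp [Pi.single_apply, eq_comm]
  set f := Ifun (n := 2*N) m with hf
  have term_eq : ∀ i k : Fin (2*N),
      (if i < k then x i * x k * (pd f x i * pd (fun y => y j) x k
          - pd f x k * pd (fun y => y j) x i) else 0)
      = (if k = j then (if i < k then x i * x k * pd f x i else 0) else 0)
        - (if i = j then (if i < k then x i * x k * pd f x k else 0) else 0) := by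
    intro i k
    rw [hg k, hg i]
    split_ifs <;> ring
  have inner : ∀ i : Fin (2*N),
      (∑ k : Fin (2*N), if i < k then x i * x k * (pd f x i * pd (fun y => y j) x k
          - pd f x k * pd (fun y => y j) x i) else 0)
      = (if i < j then x i * x j * pd f x i else 0)
        - (if i = j then (∑ k : Fin (2*N), if j < k then x j * x k * pd f x k else 0) else 0) := by
    intro i
    rw [Finset.sum_congr rfl (fun k _ => term_eq i k), Finset.sum_sub_distrib]
    congr 1
    · rw [Finset.sum_ite_eq' Finset.univ j (fun k => if i < k then x i * x k * pd f x i else 0)]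
      simp
    · by_cases h : i = j
      · subst h; simp
      · simp [h]
  have hred : pb f (fun y => y j) x
      = (∑ i : Fin (2*N), if i < j then x i * x j * pd f x i else 0)
        - (∑ k : Fin (2*N), if j < k then x j * x k * pd f x k else 0) := by
    rw [pb, Finset.sum_congr rfl (fun i _ => inner i), Finset.sum_sub_distrib]
    congr 1
    rw [Finset.sum_ite_eq' Finset.univ j]
    simp
  have hkey : ∀ i : Fin (2*N), x i * pd f x i = Ifun m x * esgn m i.val := key m x hx
  have hA : (∑ i : Fin (2*N), if i < j then x i * x j * pd f x i else 0)
      = Ifun m x * x j * ∑ t ∈ Finset.range j.val, esgn m t := by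
    have step : ∀ i : Fin (2*N), (if i < j then x i * x j * pd f x i else 0)
        = Ifun m x * x j * (if i.val < j.val then esgn m i.val else 0) := by
      intro i
      simp only [Fin.lt_def]
      split_ifs with h
      · rw [show x i * x j * pd f x i = x j * (x i * pd f x i) by ring, hkey i]; ring
      · ring
    rw [Finset.sum_congr rfl (fun i _ => step i), ← Finset.mul_sum]
    congr 1
    rw [Fin.sum_univ_eq_sum_range (fun t => if t < j.val then esgn m t else 0) (2*N),
      ← Finset.sum_filter]
    congr 1
    ext t
    simp only [Finset.mem_filter, Finset.mem_range]
    omega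
  have hB : (∑ k : Fin (2*N), if j < k then x j * x k * pd f x k else 0)
      = Ifun m x * x j * ∑ t ∈ Finset.Ico (j.val + 1) (2*N), esgn m t := by
    have step : ∀ i : Fin (2*N), (if j < i then x j * x i * pd f x i else 0)
        = Ifun m x * x j * (if j.val < i.val then esgn m i.val else 0) := by
      intro i
      simp only [Fin.lt_def]
      split_ifs with h
      · rw [show x j * x i * pd f x i = x j * (x i * pd f x i) by ring, hkey i]; ring
      · ring
    rw [Finset.sum_congr rfl (fun i _ => step i), ← Finset.mul_sum]
    congr 1
    rw [Fin.sum_univ_eq_sum_range (fun t => if j.val < t then esgn m t else 0) (2*N),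
      ← Finset.sum_filter]
    congr 1
    ext t
    simp only [Finset.mem_filter, Finset.mem_range, Finset.mem_Ico]
    omega
  have hIco : ∑ t ∈ Finset.Ico (j.val + 1) (2*N), esgn m t
      = (∑ t ∈ Finset.range (2*N), esgn m t) - ∑ t ∈ Finset.range (j.val + 1), esgn m t := by
    have := Finset.sum_Ico_consecutive (fun t => esgn m t)
      (Nat.zero_le (j.val + 1)) (by omega : j.val + 1 ≤ 2*N)
    simp only [← Finset.range_eq_Ico] at this
    linarith [this]
  have hF2N : (∑ t ∈ Finset.range (2*N), esgn m t) = 0 := by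
    rw [Fsum]
    simp only [Nat.odd_iff]
    rw [if_neg]
    omega
  have hFj1 : (∑ t ∈ Finset.range (j.val + 1), esgn m t)
      = (∑ t ∈ Finset.range j.val, esgn m t) + esgn m j.val := Finset.sum_range_succ _ _
  rw [hred] at *
  constructor
  · intro hj
    rw [hA, hB, hIco, hF2N, hFj1, Fsum]
    unfold esgn
    simp only [hf, Nat.odd_iff]
    split_ifs <;> first | omega | ring
  · intro hj
    rw [hA, hB, hIco, hF2N, hFj1, Fsum]
    unfold esgn
    simp only [hf, Nat.odd_iff]
    split_ifs <;> first | omega | ring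
end

section
/- Let n be even, a, k ∈ ℝ^n, and 1 ≤ m ≤ n/2 − 1. Then {F_m, H}(x) = 0 for all x in the positive orthant (0,∞)^n if and only if S_{jm} = 0 for every j = 1,...,2m, where S_{jm} = a_j (−Σ_{i=1}^{j−1} k_i + Σ_{i=j+1}^{2m} k_i). -/
open Finset


noncomputable def eps (i : ℕ) : ℝ := if Even i then -1 else 1
noncomputable def dd (u : ℕ) : ℝ := if Even u then 0 else -1

lemma dd_add_eps (t : ℕ) : dd t + eps t = dd (t+1) := by
  unfold dd eps
  rcases Nat.even_or_odd t with h | h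
  · simp [h, Nat.even_add_one, Nat.not_even_iff_odd.mpr (Even.add_one h)]
  · simp [Nat.not_even_iff_odd.mpr h, Nat.even_add_one, Nat.not_even_iff_odd.mpr h]

lemma dd_add_dd_succ (t : ℕ) : dd t + dd (t+1) = -1 := by
  unfold dd
  rcases Nat.even_or_odd t with h | h
  · simp [h, Nat.not_even_iff_odd.mpr (Even.add_one h)]
  · simp [Nat.not_even_iff_odd.mpr h, Nat.even_add_one, Nat.odd_iff.mp h]

lemma eps_sum_Ico (s t : ℕ) (h : s ≤ t) : ∑ i ∈ Finset.Ico s t, eps i = dd t - dd s := by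
  induction t, h using Nat.le_induction with
  | base => simp
  | succ t ht ih =>
      rw [Finset.sum_Ico_succ_top ht, ih, ← dd_add_eps]
      ring

lemma eps_fin_sum {n : ℕ} (s t : ℕ) (hs : s ≤ t) (ht : t ≤ n) :
    ∑ i ∈ Finset.univ.filter (fun i : Fin n => s ≤ i.val ∧ i.val < t), eps i.val
      = dd t - dd s := by
  rw [← eps_sum_Ico s t hs, Finset.sum_filter,
    Fin.sum_univ_eq_sum_range (fun j => if s ≤ j ∧ j < t then eps j else 0) n,
    ← Finset.sum_filter]
  apply Finset.sum_congr _ (fun _ _ => rfl)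
  ext j
  simp only [Finset.mem_filter, Finset.mem_range, Finset.mem_Ico]
  omega

lemma sum_ite_mul_right {n : ℕ} (s : Finset (Fin n)) (P : Fin n → Prop) [DecidablePred P]
    (g : Fin n → ℝ) (c : ℝ) :
    ∑ i ∈ s, (if P i then g i * c else 0) = (∑ i ∈ s, if P i then g i else 0) * c := by
  rw [Finset.sum_mul]
  exact Finset.sum_congr rfl fun i _ => by by_cases h : P i <;> simp [h]

lemma core {n M : ℕ} (hMn : M ≤ n) (hM : Even M) (hn : Even n) (b kk : Fin n → ℝ)
    (v : ℝ) (hv : v = ∑ l ∈ Finset.univ.filter (fun l : Fin n => l.val < M), b l) :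
    (∑ i : Fin n, ∑ j : Fin n, if i < j then
        (if i.val < M then b i else eps i.val * v) * (b j + kk j)
      - (if j.val < M then b j else eps j.val * v) * (b i + kk i)
      else 0)
    = ∑ j ∈ Finset.univ.filter (fun j : Fin n => j.val < M),
        b j * (-(∑ i ∈ Finset.univ.filter (fun i : Fin n => i.val < j.val), kk i)
          + ∑ i ∈ Finset.univ.filter (fun i : Fin n => j.val < i.val ∧ i.val < M), kk i) := by
  classical
  set T : Finset (Fin n) := Finset.univ.filter (fun i : Fin n => i.val < M) with hT
  set U : Finset (Fin n) := Finset.univ.filter (fun i : Fin n => ¬ i.val < M) with hU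
  set p : Fin n → ℝ := fun i => if i.val < M then b i else eps i.val * v with hp
  set q : Fin n → ℝ := fun i => b i + kk i with hq
  set f : Fin n → Fin n → ℝ := fun i j => if i < j then p i * q j - p j * q i else 0 with hf
  have key : (∑ i : Fin n, ∑ j : Fin n, f i j) =
      ((∑ i ∈ T, ∑ j ∈ T, f i j) + (∑ i ∈ T, ∑ j ∈ U, f i j)) +
      ((∑ i ∈ U, ∑ j ∈ T, f i j) + (∑ i ∈ U, ∑ j ∈ U, f i j)) := by
    rw [← Finset.sum_filter_add_sum_filter_not Finset.univ (fun i : Fin n => i.val < M)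
      (fun i => ∑ j : Fin n, f i j)]
    congr 1 <;>
    · rw [← Finset.sum_add_distrib]
      exact Finset.sum_congr rfl fun i _ =>
        (Finset.sum_filter_add_sum_filter_not Finset.univ _ _).symm
  rw [key]
  have hmemT : ∀ i : Fin n, i ∈ T ↔ i.val < M := fun i => by
    rw [hT]; simp
  have hmemU : ∀ i : Fin n, i ∈ U ↔ M ≤ i.val := fun i => by
    rw [hU]; simp only [Finset.mem_filter, Finset.mem_univ, true_and]; omega
  have hpT : ∀ i ∈ T, p i = b i := fun i hi => by
    rw [hp]; exact if_pos ((hmemT i).mp hi)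
  have hpU : ∀ i ∈ U, p i = eps i.val * v := fun i hi => by
    rw [hp]; exact if_neg (by have := (hmemU i).mp hi; omega)
  have ddM : dd M = 0 := by unfold dd; simp [hM]
  have ddn : dd n = 0 := by unfold dd; simp [hn]
  -- block UT = 0
  have hUT : (∑ i ∈ U, ∑ j ∈ T, f i j) = 0 := by
    apply Finset.sum_eq_zero; intro i hi
    apply Finset.sum_eq_zero; intro j hj
    have hi' := (hmemU i).mp hi
    have hj' := (hmemT j).mp hj
    have hnlt : ¬ i < j := by rw [Fin.lt_def]; omega
    rw [hf]; exact if_neg hnlt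
  -- block TU
  have hepsU : (∑ j ∈ U, eps j.val) = 0 := by
    have hUeq : U = Finset.univ.filter (fun i : Fin n => M ≤ i.val ∧ i.val < n) := by
      rw [hU]; apply Finset.filter_congr; intro i _
      constructor
      · intro h; exact ⟨by omega, i.isLt⟩
      · intro h; omega
    rw [hUeq, eps_fin_sum M n hMn le_rfl, ddM, ddn]; ring
  have hTU : (∑ i ∈ T, ∑ j ∈ U, f i j) = v * ∑ j ∈ U, q j := by
    have step : ∀ i ∈ T, ∀ j ∈ U, f i j = b i * q j - eps j.val * (v * q i) := by
      intro i hi j hj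
      have hi' := (hmemT i).mp hi
      have hj' := (hmemU j).mp hj
      have hlt : i < j := by rw [Fin.lt_def]; omega
      rw [hf]; simp only [if_pos hlt, hpT i hi, hpU j hj]; ring
    have h2 : ∀ i ∈ T, ∑ j ∈ U, (eps j.val * (v * q i)) = 0 := by
      intro i _
      rw [← Finset.sum_mul, hepsU, zero_mul]
    calc (∑ i ∈ T, ∑ j ∈ U, f i j)
        = ∑ i ∈ T, ((∑ j ∈ U, b i * q j) - ∑ j ∈ U, eps j.val * (v * q i)) := by
          apply Finset.sum_congr rfl; intro i hi
          rw [← Finset.sum_sub_distrib]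
          exact Finset.sum_congr rfl fun j hj => step i hi j hj
      _ = ∑ i ∈ T, ∑ j ∈ U, b i * q j := by
          apply Finset.sum_congr rfl; intro i hi
          rw [h2 i hi, sub_zero]
      _ = v * ∑ j ∈ U, q j := by
          rw [hv]; rw [Finset.sum_mul_sum]
  -- block UU
  have evalI : ∀ j ∈ U, (∑ i ∈ U, if i < j then eps i.val else 0) = dd j.val := by
    intro j hj
    rw [← Finset.sum_filter]
    have : U.filter (fun i => i < j)
        = Finset.univ.filter (fun i : Fin n => M ≤ i.val ∧ i.val < j.val) := by
      rw [hU, Finset.filter_filter]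
      apply Finset.filter_congr; intro i _
      simp only [Fin.lt_def]; omega
    rw [this, eps_fin_sum M j.val ((hmemU j).mp hj) (le_of_lt j.isLt), ddM, sub_zero]
  have evalJ : ∀ i ∈ U, (∑ j ∈ U, if i < j then eps j.val else 0) = - dd (i.val+1) := by
    intro i hi
    rw [← Finset.sum_filter]
    have : U.filter (fun j => i < j)
        = Finset.univ.filter (fun j : Fin n => i.val + 1 ≤ j.val ∧ j.val < n) := by
      rw [hU, Finset.filter_filter]
      apply Finset.filter_congr; intro j _
      simp only [Fin.lt_def]
      constructor
      · intro h; exact ⟨by omega, j.isLt⟩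
      · intro h; have := (hmemU i).mp hi; omega
    rw [this, eps_fin_sum (i.val+1) n i.isLt le_rfl, ddn, zero_sub]
  have hUU : (∑ i ∈ U, ∑ j ∈ U, f i j) = - (v * ∑ j ∈ U, q j) := by
    have step : ∀ i ∈ U, ∀ j ∈ U, f i j
        = (if i < j then eps i.val * (v * q j) else 0)
        - (if i < j then eps j.val * (v * q i) else 0) := by
      intro i hi j hj
      rw [hf]; by_cases h : i < j
      · simp only [if_pos h, hpU i hi, hpU j hj]; ring
      · simp [h]
    calc (∑ i ∈ U, ∑ j ∈ U, f i j)
        = (∑ i ∈ U, ∑ j ∈ U, if i < j then eps i.val * (v * q j) else 0)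
        - (∑ i ∈ U, ∑ j ∈ U, if i < j then eps j.val * (v * q i) else 0) := by
          rw [← Finset.sum_sub_distrib]
          apply Finset.sum_congr rfl; intro i hi
          rw [← Finset.sum_sub_distrib]
          exact Finset.sum_congr rfl fun j hj => step i hi j hj
      _ = (∑ j ∈ U, dd j.val * (v * q j)) - (∑ i ∈ U, (- dd (i.val+1)) * (v * q i)) := by
          congr 1
          · rw [Finset.sum_comm]
            apply Finset.sum_congr rfl; intro j hj
            have : ∀ i : Fin n, (if i < j then eps i.val * (v * q j) else 0)
                = (if i < j then eps i.val else 0) * (v * q j) := by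
              intro i; by_cases h : i < j <;> simp [h]
            rw [Finset.sum_congr rfl fun i _ => this i, ← Finset.sum_mul, evalI j hj]
          · apply Finset.sum_congr rfl; intro i hi
            have : ∀ j : Fin n, (if i < j then eps j.val * (v * q i) else 0)
                = (if i < j then eps j.val else 0) * (v * q i) := by
              intro j; by_cases h : i < j <;> simp [h]
            rw [Finset.sum_congr rfl fun j _ => this j, ← Finset.sum_mul, evalJ i hi]
      _ = ∑ j ∈ U, (dd j.val + dd (j.val+1)) * (v * q j) := by
          rw [← Finset.sum_sub_distrib]
          apply Finset.sum_congr rfl; intro j _; ring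
      _ = ∑ j ∈ U, (-1 : ℝ) * (v * q j) := by
          exact Finset.sum_congr rfl fun j _ => by rw [dd_add_dd_succ]
      _ = - (v * ∑ j ∈ U, q j) := by
          rw [Finset.mul_sum]; rw [← Finset.sum_neg_distrib]
          exact Finset.sum_congr rfl fun j _ => by ring
  -- block TT
  have hTT : (∑ i ∈ T, ∑ j ∈ T, f i j)
      = ∑ j ∈ T, b j * (-(∑ i ∈ Finset.univ.filter (fun i : Fin n => i.val < j.val), kk i)
          + ∑ i ∈ Finset.univ.filter (fun i : Fin n => j.val < i.val ∧ i.val < M), kk i) := by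
    have step : ∀ i ∈ T, ∀ j ∈ T, f i j
        = (if i < j then b i * kk j else 0) - (if i < j then b j * kk i else 0) := by
      intro i hi j hj
      rw [hf]; by_cases h : i < j
      · simp only [if_pos h, hpT i hi, hpT j hj, hq]; ring
      · simp [h]
    have expand : (∑ i ∈ T, ∑ j ∈ T, f i j)
        = (∑ i ∈ T, ∑ j ∈ T, if i < j then b i * kk j else 0)
        - (∑ i ∈ T, ∑ j ∈ T, if i < j then b j * kk i else 0) := by
      rw [← Finset.sum_sub_distrib]
      apply Finset.sum_congr rfl; intro i hi
      rw [← Finset.sum_sub_distrib]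
      exact Finset.sum_congr rfl fun j hj => step i hi j hj
    have hA : (∑ i ∈ T, ∑ j ∈ T, if i < j then b i * kk j else 0)
        = ∑ j ∈ T, b j * (∑ i ∈ Finset.univ.filter
            (fun i : Fin n => j.val < i.val ∧ i.val < M), kk i) := by
      apply Finset.sum_congr rfl; intro i hi
      have h1 : ∀ j : Fin n, (if i < j then b i * kk j else 0)
          = b i * (if i < j then kk j else 0) := by
        intro j; by_cases h : i < j <;> simp [h]
      rw [Finset.sum_congr rfl fun j _ => h1 j, ← Finset.mul_sum, ← Finset.sum_filter]
      congr 1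
      rw [hT, Finset.filter_filter]
      apply Finset.sum_congr _ (fun _ _ => rfl)
      ext l
      simp only [Finset.mem_filter, Finset.mem_univ, true_and, Fin.lt_def]
      omega
    have hB : (∑ i ∈ T, ∑ j ∈ T, if i < j then b j * kk i else 0)
        = ∑ j ∈ T, b j * (∑ i ∈ Finset.univ.filter
            (fun i : Fin n => i.val < j.val), kk i) := by
      rw [Finset.sum_comm]
      apply Finset.sum_congr rfl; intro j hj
      have h1 : ∀ i : Fin n, (if i < j then b j * kk i else 0)
          = b j * (if i < j then kk i else 0) := by
        intro i; by_cases h : i < j <;> simp [h]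
      rw [Finset.sum_congr rfl fun i _ => h1 i, ← Finset.mul_sum, ← Finset.sum_filter]
      congr 1
      rw [hT, Finset.filter_filter]
      have hjM := (hmemT j).mp hj
      apply Finset.sum_congr _ (fun _ _ => rfl)
      ext l
      simp only [Finset.mem_filter, Finset.mem_univ, true_and, Fin.lt_def]
      omega
    rw [expand, hA, hB, ← Finset.sum_sub_distrib]
    exact Finset.sum_congr rfl fun j _ => by ring
  rw [hUT, hTU, hUU, hTT]
  ring



/-- `S_{jm} = a_j (−Σ_{i<j} k_i + Σ_{j<i≤2m} k_i)` (here `j : Fin n` is the 0-based index of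
the 1-based index `j+1`). -/
def Sfun {n : ℕ} (a k : Fin n → ℝ) (j : Fin n) (m : ℕ) : ℝ :=
  a j * (-(∑ i ∈ Finset.univ.filter (fun i : Fin n => i.val < j.val), k i)
    + ∑ i ∈ Finset.univ.filter (fun i : Fin n => j.val < i.val ∧ i.val < 2*m), k i)

lemma pdH {n : ℕ} (a k : Fin n → ℝ) (x : Fin n → ℝ) (hx : ∀ i, 0 < x i) (i : Fin n) :
    pd (Hfun a k) x i = a i + k i / x i := by
  classical
  have hH : HasFDerivAt (Hfun a k)
      (∑ j : Fin n, (a j + k j / x j) • (ContinuousLinearMap.proj j :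
        (Fin n → ℝ) →L[ℝ] ℝ)) x := by
    show HasFDerivAt (fun y : Fin n → ℝ => ∑ j : Fin n, (a j * y j + k j * Real.log (y j))) _ x
    apply HasFDerivAt.fun_sum
    intro j _
    have h1 : HasFDerivAt (fun y : Fin n → ℝ => y j)
        (ContinuousLinearMap.proj j : (Fin n → ℝ) →L[ℝ] ℝ) x :=
      (ContinuousLinearMap.proj j : (Fin n → ℝ) →L[ℝ] ℝ).hasFDerivAt
    have hlog : HasFDerivAt (fun y : Fin n → ℝ => Real.log (y j))
        ((x j)⁻¹ • (ContinuousLinearMap.proj j : (Fin n → ℝ) →L[ℝ] ℝ)) x :=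
      by have := (Real.hasDerivAt_log (ne_of_gt (hx j))).comp_hasFDerivAt x h1; exact this
    have := (h1.const_mul (a j)).add (hlog.const_mul (k j))
    refine this.congr_fderiv ?_
    ext y
    simp only [ContinuousLinearMap.add_apply, ContinuousLinearMap.coe_smul',
      Pi.smul_apply, ContinuousLinearMap.proj_apply, smul_eq_mul]
    field_simp
  rw [pd, hH.fderiv]
  simp only [ContinuousLinearMap.sum_apply, ContinuousLinearMap.coe_smul',
    Pi.smul_apply, ContinuousLinearMap.proj_apply, smul_eq_mul, Pi.single_apply,
    mul_ite, mul_one, mul_zero, Finset.sum_ite_eq', Finset.mem_univ, if_true]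

lemma pdF {n : ℕ} (a : Fin n → ℝ) (m : ℕ) (x : Fin n → ℝ) (hx : ∀ i, 0 < x i) (i : Fin n) :
    x i * pd (Ffun a m) x i
      = (if i.val < 2*m then a i * x i else eps i.val * vfun a (2*m) x) * Ifun m x := by
  classical
  set SO := Finset.univ.filter (fun i : Fin n => 2*m ≤ i.val ∧ Odd i.val) with hSO
  set SE := Finset.univ.filter (fun i : Fin n => 2*m ≤ i.val ∧ Even i.val) with hSE
  set T := Finset.univ.filter (fun j : Fin n => j.val < 2*m) with hT
  have hPEpos : (0:ℝ) < ∏ j ∈ SE, x j := Finset.prod_pos fun j _ => hx j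
  have hPOpos : (0:ℝ) < ∏ j ∈ SO, x j := Finset.prod_pos fun j _ => hx j
  have hPEne : (∏ j ∈ SE, x j) ≠ 0 := ne_of_gt hPEpos
  set Lv := ∑ j ∈ T, a j • (ContinuousLinearMap.proj j : (Fin n → ℝ) →L[ℝ] ℝ) with hLv
  set LPO := ∑ j ∈ SO, (∏ l ∈ SO.erase j, x l) •
    (ContinuousLinearMap.proj j : (Fin n → ℝ) →L[ℝ] ℝ) with hLPO
  set LPE := ∑ j ∈ SE, (∏ l ∈ SE.erase j, x l) •
    (ContinuousLinearMap.proj j : (Fin n → ℝ) →L[ℝ] ℝ) with hLPE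
  have hv : HasFDerivAt (vfun a (2*m)) Lv x := by
    show HasFDerivAt (fun y : Fin n → ℝ => ∑ j ∈ T, a j * y j) Lv x
    apply HasFDerivAt.fun_sum
    intro j _
    exact (ContinuousLinearMap.proj j : (Fin n → ℝ) →L[ℝ] ℝ).hasFDerivAt.const_mul (a j)
  have hPO : HasFDerivAt (fun y : Fin n → ℝ => ∏ j ∈ SO, y j) LPO x :=
    HasFDerivAt.finset_prod fun j _ =>
      (ContinuousLinearMap.proj j : (Fin n → ℝ) →L[ℝ] ℝ).hasFDerivAt
  have hPE : HasFDerivAt (fun y : Fin n → ℝ => ∏ j ∈ SE, y j) LPE x :=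
    HasFDerivAt.finset_prod fun j _ =>
      (ContinuousLinearMap.proj j : (Fin n → ℝ) →L[ℝ] ℝ).hasFDerivAt
  have hPEinv : HasFDerivAt (fun y : Fin n → ℝ => (∏ j ∈ SE, y j)⁻¹)
      ((-((∏ j ∈ SE, x j)^2)⁻¹) • LPE) x :=
    (hasDerivAt_inv hPEne).comp_hasFDerivAt x hPE
  have hI : HasFDerivAt (Ifun m)
      ((∏ j ∈ SO, x j) • ((-((∏ j ∈ SE, x j)^2)⁻¹) • LPE)
        + (∏ j ∈ SE, x j)⁻¹ • LPO) x := by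
    have heq : (Ifun m : (Fin n → ℝ) → ℝ)
        = fun y => (∏ j ∈ SO, y j) * (∏ j ∈ SE, y j)⁻¹ := by
      funext y
      rw [Ifun, div_eq_mul_inv, hSO, hSE]
    rw [heq]
    exact hPO.mul hPEinv
  have hF : HasFDerivAt (Ffun a m)
      (vfun a (2*m) x • ((∏ j ∈ SO, x j) • ((-((∏ j ∈ SE, x j)^2)⁻¹) • LPE)
        + (∏ j ∈ SE, x j)⁻¹ • LPO) + Ifun m x • Lv) x := by
    show HasFDerivAt (fun y => vfun a (2*m) y * Ifun m y) _ x
    exact hv.mul hI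
  rw [pd, hF.fderiv]
  have hIval : Ifun m x = (∏ j ∈ SO, x j) / (∏ j ∈ SE, x j) := by
    rw [Ifun, hSO, hSE]
  simp only [ContinuousLinearMap.add_apply, ContinuousLinearMap.coe_smul',
    Pi.smul_apply, hLv, hLPO, hLPE, ContinuousLinearMap.sum_apply,
    ContinuousLinearMap.proj_apply, smul_eq_mul, Pi.single_apply,
    mul_ite, mul_one, mul_zero, Finset.sum_ite_eq']
  have hmemT : (i ∈ T) ↔ i.val < 2*m := by rw [hT]; simp
  have hmemSO : (i ∈ SO) ↔ (2*m ≤ i.val ∧ Odd i.val) := by rw [hSO]; simp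
  have hmemSE : (i ∈ SE) ↔ (2*m ≤ i.val ∧ Even i.val) := by rw [hSE]; simp
  by_cases h1 : i.val < 2*m
  · have hnSO : i ∉ SO := fun h => by have := (hmemSO.mp h).1; omega
    have hnSE : i ∉ SE := fun h => by have := (hmemSE.mp h).1; omega
    have hiT : i ∈ T := hmemT.mpr h1
    simp only [if_pos h1, if_pos hiT, if_neg hnSO, if_neg hnSE, mul_zero, zero_mul,
      add_zero, zero_add, neg_zero]
    ring
  · rcases Nat.even_or_odd i.val with he | ho
    · -- even case, i ∈ SE
      have hiSE : i ∈ SE := hmemSE.mpr ⟨by omega, he⟩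
      have hnSO : i ∉ SO := fun h => by
        have := (hmemSO.mp h).2; exact (Nat.not_even_iff_odd.mpr this) he
      have hnT : i ∉ T := fun h => h1 (hmemT.mp h)
      have heps : eps i.val = -1 := by rw [eps, if_pos he]
      have hprod : x i * ∏ l ∈ SE.erase i, x l = ∏ j ∈ SE, x j :=
        Finset.mul_prod_erase SE x hiSE
      simp only [if_neg h1, if_neg hnSO, if_neg hnT, if_pos hiSE, mul_zero, zero_mul,
        add_zero, zero_add, heps, hIval]
      field_simp
      linear_combination (-(vfun a (2*m) x)) * hprod
    · -- odd case, i ∈ SO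
      have hiSO : i ∈ SO := hmemSO.mpr ⟨by omega, ho⟩
      have hnSE : i ∉ SE := fun h => by
        have := (hmemSE.mp h).2; exact (Nat.not_even_iff_odd.mpr ho) this
      have hnT : i ∉ T := fun h => h1 (hmemT.mp h)
      have heps : eps i.val = 1 := by rw [eps, if_neg (Nat.not_even_iff_odd.mpr ho)]
      have hprod : x i * ∏ l ∈ SO.erase i, x l = ∏ j ∈ SO, x j :=
        Finset.mul_prod_erase SO x hiSO
      simp only [if_neg h1, if_neg hnSE, if_neg hnT, if_pos hiSO, mul_zero, zero_mul,
        add_zero, zero_add, heps, hIval]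
      field_simp
      linear_combination (vfun a (2*m) x) * hprod

lemma pb_formula {n : ℕ} (hn : Even n) (a k : Fin n → ℝ) (m : ℕ) (hMn : 2*m ≤ n)
    (x : Fin n → ℝ) (hx : ∀ i, 0 < x i) :
    pb (Ffun a m) (Hfun a k) x
      = Ifun m x * ∑ j ∈ Finset.univ.filter (fun j : Fin n => j.val < 2*m),
          Sfun a k j m * x j := by
  classical
  have hsummand : ∀ i j : Fin n,
      (if i < j then x i * x j * (pd (Ffun a m) x i * pd (Hfun a k) x j
        - pd (Ffun a m) x j * pd (Hfun a k) x i) else 0)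
      = (if i < j then
          ((if i.val < 2*m then a i * x i else eps i.val * vfun a (2*m) x) * (a j * x j + k j)
        - (if j.val < 2*m then a j * x j else eps j.val * vfun a (2*m) x) * (a i * x i + k i))
          else 0) * Ifun m x := by
    intro i j
    by_cases h : i < j
    · rw [if_pos h, if_pos h]
      have e1 := pdF a m x hx i
      have e2 := pdF a m x hx j
      have e3 := pdH a k x hx i
      have e4 := pdH a k x hx j
      have key : x i * x j * (pd (Ffun a m) x i * pd (Hfun a k) x j
          - pd (Ffun a m) x j * pd (Hfun a k) x i)
          = (x i * pd (Ffun a m) x i) * (x j * pd (Hfun a k) x j)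
          - (x j * pd (Ffun a m) x j) * (x i * pd (Hfun a k) x i) := by ring
      have hq : ∀ l : Fin n, x l * (a l + k l / x l) = a l * x l + k l := by
        intro l
        have hne : x l ≠ 0 := ne_of_gt (hx l)
        field_simp
      rw [key, e1, e2, e3, e4, hq i, hq j]
      ring
    · rw [if_neg h, if_neg h, zero_mul]
  calc pb (Ffun a m) (Hfun a k) x
      = ∑ i : Fin n, ∑ j : Fin n, (if i < j then
          ((if i.val < 2*m then a i * x i else eps i.val * vfun a (2*m) x) * (a j * x j + k j)
        - (if j.val < 2*m then a j * x j else eps j.val * vfun a (2*m) x) * (a i * x i + k i))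
          else 0) * Ifun m x := by
        rw [pb]
        exact Finset.sum_congr rfl fun i _ => Finset.sum_congr rfl fun j _ => hsummand i j
    _ = (∑ i : Fin n, ∑ j : Fin n, if i < j then
          ((if i.val < 2*m then a i * x i else eps i.val * vfun a (2*m) x) * (a j * x j + k j)
        - (if j.val < 2*m then a j * x j else eps j.val * vfun a (2*m) x) * (a i * x i + k i))
          else 0) * Ifun m x := by
        rw [Finset.sum_mul]
        exact Finset.sum_congr rfl fun i _ => (Finset.sum_mul _ _ _).symm
    _ = (∑ j ∈ Finset.univ.filter (fun j : Fin n => j.val < 2*m),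
          (a j * x j) * (-(∑ i ∈ Finset.univ.filter (fun i : Fin n => i.val < j.val), k i)
            + ∑ i ∈ Finset.univ.filter (fun i : Fin n => j.val < i.val ∧ i.val < 2*m), k i))
          * Ifun m x := by
        congr 1
        exact core hMn (even_two_mul m) hn (fun l => a l * x l) k (vfun a (2*m) x) rfl
    _ = Ifun m x * ∑ j ∈ Finset.univ.filter (fun j : Fin n => j.val < 2*m),
          Sfun a k j m * x j := by
        rw [mul_comm]
        congr 1
        apply Finset.sum_congr rfl
        intro j _
        rw [Sfun]
        ring

/-- Proposition 4.1 of the paper: for even `n = 2N` and `1 ≤ m ≤ N − 1`, `{F_m, H} = 0` on the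
positive orthant iff `S_{jm} = 0` for every (1-based) `j = 1,…,2m` (0-based `j.val < 2m`). -/
theorem stmt_8 (N : ℕ) (a k : Fin (2*N) → ℝ) (m : ℕ) (hm1 : 1 ≤ m) (hm2 : m + 1 ≤ N) :
    (∀ x : Fin (2*N) → ℝ, (∀ i, 0 < x i) → pb (Ffun a m) (Hfun a k) x = 0) ↔
    (∀ j : Fin (2*N), j.val < 2*m → Sfun a k j m = 0) := by
  classical
  have hMn : 2*m ≤ 2*N := by omega
  have hn : Even (2*N) := even_two_mul N
  constructor
  · intro h j hj
    have hsum : ∀ x : Fin (2*N) → ℝ, (∀ i, 0 < x i) →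
        (∑ l ∈ Finset.univ.filter (fun l : Fin (2*N) => l.val < 2*m),
          Sfun a k l m * x l) = 0 := by
      intro x hx
      have h0 := h x hx
      rw [pb_formula hn a k m hMn x hx] at h0
      rcases mul_eq_zero.mp h0 with h1 | h1
      · exact absurd h1 (ne_of_gt (Ifun_pos m x hx))
      · exact h1
    have h1 : (∑ l ∈ Finset.univ.filter (fun l : Fin (2*N) => l.val < 2*m),
        Sfun a k l m) = 0 := by
      have := hsum (fun _ => 1) (fun _ => one_pos)
      simpa using this
    have hx2 : ∀ i : Fin (2*N), (0:ℝ) < (if i = j then 2 else 1) := by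
      intro i; by_cases hij : i = j <;> simp [hij]
    have h2 := hsum (fun i => if i = j then 2 else 1) hx2
    have hjmem : j ∈ Finset.univ.filter (fun l : Fin (2*N) => l.val < 2*m) := by
      simp [hj]
    have h3 : (∑ l ∈ Finset.univ.filter (fun l : Fin (2*N) => l.val < 2*m),
        Sfun a k l m * (if l = j then 2 else 1))
        = (∑ l ∈ Finset.univ.filter (fun l : Fin (2*N) => l.val < 2*m), Sfun a k l m)
          + Sfun a k j m := by
      have hterm : ∀ l : Fin (2*N), Sfun a k l m * (if l = j then 2 else 1)
          = Sfun a k l m + (if l = j then Sfun a k l m else 0) := by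
        intro l; by_cases hlj : l = j <;> simp [hlj] <;> ring
      rw [Finset.sum_congr rfl fun l _ => hterm l, Finset.sum_add_distrib,
        Finset.sum_ite_eq' _ j, if_pos hjmem]
    rw [h3, h1, zero_add] at h2
    exact h2
  · intro h x hx
    rw [pb_formula hn a k m hMn x hx]
    rw [Finset.sum_eq_zero, mul_zero]
    intro l hl
    have : l.val < 2*m := by simpa using hl
    rw [h l this, zero_mul]
end
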